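/- arXiv:1109.4606 — 8 statements merged into one kernel-verified Lean document; each statement's English description precedes it below -/
import Mathlib

section
/- Let W be a Weyl group with set of involutions I = {w ∈ W : w^2 = 1}. Define a ℚ-linear action of each simple reflection s ∈ S on the ℚ-vector space M₁ with basis (a_w)_{w ∈ I} by: s·a_w = a_w + 2a_{sw} if sw = ws > w; s·a_w = -a_w if sw = ws < w; s·a_w = a_{sws} if sw ≠ ws. Then these operators satisfy s² = 1 for each s ∈ S, i.e., applying s twice to any basis vector a_w returns a_w. -/
open Finsupp

/-- the operators `σ s` on the ℚ-vector space with basis indexed by the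
involutions of a Weyl group `W`, defined by
`s·a_w = a_w + 2a_{sw}` if `sw = ws > w`, `s·a_w = -a_w` if `sw = ws < w`,
`s·a_w = a_{sws}` if `sw ≠ ws`, satisfy `s² = 1` on each basis vector `a_w`. -/
theorem sigma_squared_eq_one {B W : Type*} [Group W] [Finite W] {M : CoxeterMatrix B}
    (cs : CoxeterSystem M W) (σ : B → ((W →₀ ℚ) →ₗ[ℚ] (W →₀ ℚ)))
    (h1 : ∀ (i : B) (w : W), w * w = 1 →
      cs.simple i * w = w * cs.simple i →
      cs.length w < cs.length (cs.simple i * w) →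
      σ i (single w 1) = single w 1 + 2 • single (cs.simple i * w) 1)
    (h2 : ∀ (i : B) (w : W), w * w = 1 →
      cs.simple i * w = w * cs.simple i →
      cs.length (cs.simple i * w) < cs.length w →
      σ i (single w 1) = - single w 1)
    (h3 : ∀ (i : B) (w : W), w * w = 1 →
      cs.simple i * w ≠ w * cs.simple i →
      σ i (single w 1) = single (cs.simple i * w * cs.simple i) 1) :
    ∀ (i : B) (w : W), w * w = 1 → σ i (σ i (single w 1)) = single w 1 := by
  intro i w hw
  set s := cs.simple i with hsdef
  have hss : s * s = 1 := cs.simple_mul_simple_self i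
  by_cases hc : s * w = w * s
  · have hsw : (s * w) * (s * w) = 1 := by
      calc (s * w) * (s * w) = s * (w * s) * w := by group
      _ = s * (s * w) * w := by rw [hc]
      _ = (s * s) * (w * w) := by group
      _ = 1 := by rw [hss, hw, mul_one]
    rcases (cs.length_simple_mul_ne w i).lt_or_gt with hlt | hlt
    · -- ℓ(sw) < ℓ(w)
      rw [h2 i w hw hc hlt, map_neg, h2 i w hw hc hlt, neg_neg]
    · -- ℓ(sw) > ℓ(w)
      have hssw : s * (s * w) = w := by rw [← mul_assoc, hss, one_mul]
      have hcomm' : s * (s * w) = (s * w) * s := by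
        rw [hssw, hc, mul_assoc, hss, mul_one]
      have hlt' : cs.length (s * (s * w)) < cs.length (s * w) := by
        rw [hssw]; exact hlt
      rw [h1 i w hw hc hlt, map_add, map_nsmul, h1 i w hw hc hlt,
        h2 i (s * w) hsw hcomm' hlt']
      rw [smul_neg]
      abel
  · have hsws : (s * w * s) * (s * w * s) = 1 := by
      calc (s * w * s) * (s * w * s) = s * w * (s * s) * w * s := by group
      _ = s * (w * w) * s := by rw [hss]; group
      _ = 1 := by rw [hw, mul_one, hss]
    have hnc' : s * (s * w * s) ≠ (s * w * s) * s := by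
      rw [show s * (s * w * s) = w * s by rw [← mul_assoc, ← mul_assoc, hss, one_mul],
        show (s * w * s) * s = s * w by rw [mul_assoc, hss, mul_one]]
      exact fun h => hc h.symm
    rw [h3 i w hw hc, h3 i (s * w * s) hsws hnc']
    congr 1
    calc s * (s * w * s) * s = (s * s) * w * (s * s) := by group
    _ = w := by rw [hss, one_mul, mul_one]
end

section
/- Let W be a Coxeter group, I its set of involutions, and M the free ℤ[u,u⁻¹]-module with basis (a_w)_{w∈I}. For s ∈ S define the operator T_s on M by: (T_s+1)(a_w) = (u+1)(a_w + a_{sw}) if sw = ws > w; (T_s+1)(a_w) = (u²-u)(a_w + a_{sw}) if sw = ws < w; (T_s+1)(a_w) = a_w + a_{sws} if sw ≠ ws > w; (T_s+1)(a_w) = u²(a_w + a_{sws}) if sw ≠ ws < w. Then for every s ∈ S and every m ∈ M, the quadratic relation T_s² m = (u²-1) T_s m + u² m holds. -/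
open Finsupp LaurentPolynomial List CoxeterSystem

namespace HeckeAux



open Classical in
/-- sign of `t` in a list: `(-1)^(count t l)`. -/
noncomputable def sgn {W : Type*} (t : W) (l : List W) : ℤˣ :=
  (l.map (fun x => if x = t then (-1 : ℤˣ) else 1)).prod

variable {W : Type*}

@[simp] lemma sgn_nil (t : W) : sgn t ([] : List W) = 1 := by simp [sgn]

open Classical in
lemma sgn_cons (t x : W) (l : List W) :
    sgn t (x :: l) = (if x = t then (-1 : ℤˣ) else 1) * sgn t l := by
  simp [sgn]

lemma sgn_cons_eq {t x : W} (l : List W) (h : x = t) : sgn t (x :: l) = -sgn t l := by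
  rw [sgn_cons, if_pos h]; simp

lemma sgn_cons_ne {t x : W} (l : List W) (h : x ≠ t) : sgn t (x :: l) = sgn t l := by
  rw [sgn_cons, if_neg h, one_mul]

lemma sgn_append (t : W) (l₁ l₂ : List W) :
    sgn t (l₁ ++ l₂) = sgn t l₁ * sgn t l₂ := by
  simp [sgn]

lemma sgn_of_not_mem {t : W} {l : List W} (h : t ∉ l) : sgn t l = 1 := by
  induction l with
  | nil => simp
  | cons x l ih =>
    rw [sgn_cons_ne l (by rintro rfl; exact h mem_cons_self)]
    exact ih (fun hl => h (mem_cons_of_mem x hl))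

lemma sgn_singleton_eq {t x : W} (h : x = t) : sgn t [x] = -1 := by
  rw [sgn_cons_eq _ h]; simp

lemma sgn_map_conj [Group W] (t u : W) (l : List W) :
    sgn t (l.map (MulAut.conj u)) = sgn (u⁻¹ * t * u) l := by
  induction l with
  | nil => simp
  | cons x l ih =>
    rw [List.map_cons]
    by_cases h : x = u⁻¹ * t * u
    · rw [sgn_cons_eq _ (by rw [h, MulAut.conj_apply]; group),
        sgn_cons_eq _ h, ih]
    · rw [sgn_cons_ne _ (fun hc => h ?_), sgn_cons_ne _ h, ih]
      rw [MulAut.conj_apply] at hc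
      rw [← hc]; group



variable {B W : Type*} [Group W] {M : CoxeterMatrix B} (cs : CoxeterSystem M W)

open Classical in
noncomputable def toFE (i : B) : Function.End (W × ℤˣ) :=
  fun p => (cs.simple i * p.1 * cs.simple i,
    (if p.1 = cs.simple i then (-1 : ℤˣ) else 1) * p.2)

lemma rightInvSeq_cons (i : B) (ω : List B) :
    cs.rightInvSeq (i :: ω) =
      ((cs.wordProd ω)⁻¹ * cs.simple i * cs.wordProd ω) :: cs.rightInvSeq ω := rfl

lemma F_apply (ω : List B) (t : W) (ε : ℤˣ) :
    (ω.map (toFE cs)).prod (t, ε) =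
      (cs.wordProd ω * t * (cs.wordProd ω)⁻¹, sgn t (cs.rightInvSeq ω) * ε) := by
  induction ω generalizing t ε with
  | nil => simp [CoxeterSystem.wordProd_nil]; rfl
  | cons i ω ih =>
    rw [List.map_cons, List.prod_cons]
    have : (toFE cs i * (List.map (toFE cs) ω).prod) (t, ε)
        = toFE cs i ((List.map (toFE cs) ω).prod (t, ε)) := rfl
    rw [this, ih, toFE, rightInvSeq_cons]
    have hiff : (cs.wordProd ω * t * (cs.wordProd ω)⁻¹ = cs.simple i)
        ↔ ((cs.wordProd ω)⁻¹ * cs.simple i * cs.wordProd ω = t) := by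
      constructor
      · intro h; rw [← h]; group
      · intro h; rw [← h]; group
    by_cases h : (cs.wordProd ω)⁻¹ * cs.simple i * cs.wordProd ω = t
    · rw [if_pos (hiff.mpr h), sgn_cons_eq _ h]
      refine Prod.ext ?_ (by simp [mul_assoc])
      simp only [CoxeterSystem.wordProd_cons, mul_inv_rev, cs.inv_simple]
      group
    · rw [if_neg (fun hc => h (hiff.mp hc)), sgn_cons_ne _ h, one_mul]
      refine Prod.ext ?_ rfl
      simp only [CoxeterSystem.wordProd_cons, mul_inv_rev, cs.inv_simple]
      group



lemma ris_getD (ω : List B) (j : ℕ) :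
    (cs.rightInvSeq ω).getD j 1 =
      (cs.wordProd (ω.drop (j + 1)))⁻¹ * cs.wordProd (ω.drop j) := by
  induction ω generalizing j with
  | nil => simp
  | cons i ω ih =>
    cases j with
    | zero =>
      simp only [CoxeterSystem.rightInvSeq, List.getD_cons_zero, List.drop_succ_cons,
        List.drop_zero, CoxeterSystem.wordProd_cons]
      group
    | succ j =>
      simpa only [CoxeterSystem.rightInvSeq, List.getD_cons_succ, List.drop_succ_cons] using ih j

lemma drop_alternatingWord (i i' : B) (j n : ℕ) :
    (alternatingWord i i' n).drop j = alternatingWord i i' (n - j) := by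
  induction n generalizing j with
  | zero => simp [alternatingWord]
  | succ n ih =>
    cases j with
    | zero => simp
    | succ j =>
      rw [alternatingWord_succ' i i' n, List.drop_succ_cons, ih j]
      congr 1
      omega

lemma conj_simple_zpow (i : B) (z : W) (hz : cs.simple i * z * cs.simple i = z⁻¹) (n : ℕ) :
    cs.simple i * z ^ n * cs.simple i = (z ^ n)⁻¹ := by
  have : cs.simple i * z ^ n * (cs.simple i)⁻¹ = (cs.simple i * z * (cs.simple i)⁻¹) ^ n := by
    rw [← MulAut.conj_apply, ← MulAut.conj_apply, ← map_pow]
  rw [cs.inv_simple] at this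
  rw [this, hz, inv_pow]

/-- bridge lemma for alternating words -/
lemma simple_mul_aw_prod (i i' : B) (k : ℕ) :
    cs.simple (if Even (k + M.M i i') then i' else i) * cs.wordProd (alternatingWord i i' (M.M i i'))
      = cs.wordProd (alternatingWord i i' (M.M i i')) * cs.simple (if Even k then i' else i) := by
  set m := M.M i i' with hm
  set z := cs.simple i * cs.simple i' with hzdef
  have hzm : z ^ m = 1 := cs.simple_mul_simple_pow i i'
  have hc2 : cs.simple i * z * cs.simple i = z⁻¹ := by
    rw [hzdef]; rw [mul_inv_rev, cs.inv_simple, cs.inv_simple]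
    calc cs.simple i * (cs.simple i * cs.simple i') * cs.simple i
        = (cs.simple i * cs.simple i) * cs.simple i' * cs.simple i := by group
      _ = cs.simple i' * cs.simple i := by rw [cs.simple_mul_simple_self]; group
  have hc1 : cs.simple i' * z * cs.simple i' = z⁻¹ := by
    rw [hzdef, mul_inv_rev, cs.inv_simple, cs.inv_simple]
    calc cs.simple i' * (cs.simple i * cs.simple i') * cs.simple i'
        = cs.simple i' * cs.simple i * (cs.simple i' * cs.simple i') := by group
      _ = cs.simple i' * cs.simple i := by rw [cs.simple_mul_simple_self]; group
  have hp : cs.wordProd (alternatingWord i i' m)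
      = (if Even m then 1 else cs.simple i') * z ^ (m / 2) :=
    cs.prod_alternatingWord_eq_mul_pow i i' m
  by_cases hem : Even m
  · have h2 : z ^ (m / 2) * z ^ (m / 2) = 1 := by
      rw [← pow_add]
      obtain ⟨b, hb⟩ := hem
      have : m / 2 + m / 2 = m := by omega
      rw [this, hzm]
    have hinv : (z ^ (m / 2))⁻¹ = z ^ (m / 2) := inv_eq_of_mul_eq_one_right h2
    have hcomm : ∀ j : B, cs.simple j * z * cs.simple j = z⁻¹ →
        cs.simple j * z ^ (m / 2) = z ^ (m / 2) * cs.simple j := by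
      intro j hj
      have := conj_simple_zpow cs j z hj (m / 2)
      calc cs.simple j * z ^ (m / 2)
          = (cs.simple j * z ^ (m / 2) * cs.simple j) * cs.simple j := by
            rw [mul_assoc, cs.simple_mul_simple_self, mul_one]
        _ = (z ^ (m / 2))⁻¹ * cs.simple j := by rw [this]
        _ = z ^ (m / 2) * cs.simple j := by rw [hinv]
    have hpar : Even (k + m) ↔ Even k := by
      rw [Nat.even_add]; tauto
    rw [hp, if_pos hem, one_mul]
    by_cases hek : Even k
    · rw [if_pos (hpar.mpr hek), if_pos hek, hcomm i' hc1]
    · rw [if_neg (fun h => hek (hpar.mp h)), if_neg hek, hcomm i hc2]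
  · -- m odd
    have hmodd : m = 2 * (m / 2) + 1 := by
      rcases Nat.even_or_odd m with h | h
      · exact absurd h hem
      · obtain ⟨b, hb⟩ := h; omega
    set b := m / 2 with hb
    have hz1 : z ^ (b + 1) * z ^ b = 1 := by
      rw [← pow_add]
      have : b + 1 + b = m := by omega
      rw [this, hzm]
    have key1 : z ^ (b + 1) = (z ^ b)⁻¹ := eq_inv_of_mul_eq_one_left hz1
    have hconj1 := conj_simple_zpow cs i' z hc1 b
    have hconj2 := conj_simple_zpow cs i z hc2 b
    have hpar : Even (k + m) ↔ ¬ Even k := by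
      rw [Nat.even_add]; tauto
    rw [hp, if_neg hem]
    by_cases hek : Even k
    · rw [if_neg (fun h => (hpar.mp h) hek), if_pos hek]
      -- goal: s i * (s i' * z^b) = (s i' * z^b) * s i'
      have hr : cs.simple i' * z ^ b * cs.simple i' = (z ^ b)⁻¹ := hconj1
      calc cs.simple i * (cs.simple i' * z ^ b)
          = (cs.simple i * cs.simple i') * z ^ b := by group
        _ = z ^ (b + 1) := by rw [← hzdef, ← pow_succ']
        _ = (z ^ b)⁻¹ := key1
        _ = cs.simple i' * z ^ b * cs.simple i' := hr.symm
    · rw [if_pos (hpar.mpr hek), if_neg hek]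
      -- goal: s i' * (s i' * z^b) = (s i' * z^b) * s i
      have hr : cs.simple i * z ^ b * cs.simple i = (z ^ b)⁻¹ := hconj2
      calc cs.simple i' * (cs.simple i' * z ^ b)
          = (cs.simple i' * cs.simple i') * z ^ b := by group
        _ = z ^ b := by rw [cs.simple_mul_simple_self, one_mul]
        _ = (z ^ (b + 1))⁻¹ := by rw [key1, inv_inv]
        _ = (z ^ b * z)⁻¹ := by rw [pow_succ]
        _ = z⁻¹ * (z ^ b)⁻¹ := by rw [mul_inv_rev]
        _ = z⁻¹ * (cs.simple i * z ^ b * cs.simple i) := by rw [hr]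
        _ = cs.simple i' * z ^ b * cs.simple i := by
            rw [hzdef, mul_inv_rev, cs.inv_simple, cs.inv_simple]
            simp [mul_assoc, cs.simple_mul_simple_cancel_left]


lemma aw_prod_add (i i' : B) (k : ℕ) :
    cs.wordProd (alternatingWord i i' (k + M.M i i'))
      = cs.wordProd (alternatingWord i i' (M.M i i')) * cs.wordProd (alternatingWord i i' k) := by
  induction k with
  | zero => simp [alternatingWord]
  | succ k ih =>
    have : k + 1 + M.M i i' = (k + M.M i i') + 1 := by omega
    rw [this, alternatingWord_succ', cs.wordProd_cons, ih, alternatingWord_succ',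
      cs.wordProd_cons, ← mul_assoc, ← mul_assoc, simple_mul_aw_prod cs i i' k]

lemma aw_prod_two_mul (i i' : B) :
    cs.wordProd (alternatingWord i i' (2 * M.M i i')) = 1 := by
  rw [cs.prod_alternatingWord_eq_mul_pow, if_pos ⟨M.M i i', by omega⟩, one_mul,
    Nat.mul_div_cancel_left _ (by norm_num), cs.simple_mul_simple_pow]

lemma ris_aw_half (i i' : B) :
    (cs.rightInvSeq (alternatingWord i i' (2 * M.M i i'))).take (M.M i i')
      = (cs.rightInvSeq (alternatingWord i i' (2 * M.M i i'))).drop (M.M i i') := by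
  set m := M.M i i' with hm
  set l := cs.rightInvSeq (alternatingWord i i' (2 * m)) with hl
  have hlen : l.length = 2 * m := by
    rw [hl, cs.length_rightInvSeq, length_alternatingWord]
  apply List.ext_getElem
  · simp [hlen]; omega
  · intro r h1 h2
    have hr : r < m := by simp [hlen] at h1; omega
    rw [List.getElem_take, List.getElem_drop]
    have e1 : l[r] = l.getD r 1 := (List.getD_eq_getElem l 1 (by omega)).symm
    have e2 : l[m + r] = l.getD (m + r) 1 := (List.getD_eq_getElem l 1 (by omega)).symm
    rw [e1, e2, hl, ris_getD, ris_getD, drop_alternatingWord, drop_alternatingWord,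
      drop_alternatingWord, drop_alternatingWord]
    have d1 : 2 * m - (r + 1) = (m - r - 1) + m := by omega
    have d2 : 2 * m - r = (m - r) + m := by omega
    have d3 : 2 * m - (m + r + 1) = m - r - 1 := by omega
    have d4 : 2 * m - (m + r) = m - r := by omega
    rw [d1, d2, d3, d4, aw_prod_add, aw_prod_add, mul_inv_rev, mul_assoc,
      inv_mul_cancel_left]

lemma prod_map_toFE_pow (i i' : B) (m : ℕ) :
    (toFE cs i * toFE cs i') ^ m = ((alternatingWord i i' (2 * m)).map (toFE cs)).prod := by
  induction m with
  | zero => simp [alternatingWord]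
  | succ m ih =>
    have h2 : 2 * (m + 1) = (2 * m + 1) + 1 := by omega
    rw [h2, alternatingWord_succ', alternatingWord_succ',
      if_neg (by simp [Nat.even_add_one, parity_simps]), if_pos (by simp [parity_simps]),
      List.map_cons, List.map_cons, List.prod_cons, List.prod_cons, ← ih, pow_succ', mul_assoc]

lemma toFE_liftable : M.IsLiftable (toFE cs) := by
  intro i i'
  rw [prod_map_toFE_pow, mul_comm 2 (M.M i i')]
  funext p
  obtain ⟨t, ε⟩ := p
  rw [F_apply]
  have h1 : cs.wordProd (alternatingWord i i' (M.M i i' * 2)) = 1 := by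
    rw [mul_comm]; exact aw_prod_two_mul cs i i'
  have h2 : sgn t (cs.rightInvSeq (alternatingWord i i' (M.M i i' * 2))) = 1 := by
    rw [mul_comm]
    set l := cs.rightInvSeq (alternatingWord i i' (2 * M.M i i')) with hl
    have : l = l.take (M.M i i') ++ l.drop (M.M i i') := (List.take_append_drop _ _).symm
    rw [this, sgn_append, ris_aw_half cs i i', Int.units_mul_self]
  rw [h1, h2]
  show _ = (t, ε)
  simp

lemma sgn_invariant {ω ω' : List B} (hππ : cs.wordProd ω = cs.wordProd ω') (t : W) :
    sgn t (cs.rightInvSeq ω) = sgn t (cs.rightInvSeq ω') := by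
  set Φ := cs.lift ⟨toFE cs, toFE_liftable cs⟩ with hΦ
  have key : ∀ ω : List B, Φ (cs.wordProd ω) = (ω.map (toFE cs)).prod := by
    intro ω
    induction ω with
    | nil => simp [cs.wordProd_nil]
    | cons j ω ih =>
      rw [cs.wordProd_cons, map_mul, ih, hΦ, cs.lift_apply_simple, List.map_cons, List.prod_cons]
  have h := key ω
  rw [hππ, key ω'] at h
  have := congrFun h (t, 1)
  rw [F_apply, F_apply] at this
  have := congrArg Prod.snd this
  simp at this
  exact this.symm




lemma length_ws_eq_sw {w : W} (hw : w * w = 1) (i : B) :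
    cs.length (w * cs.simple i) = cs.length (cs.simple i * w) := by
  have hwi : w⁻¹ = w := inv_eq_of_mul_eq_one_left hw
  rw [← cs.length_inv (w * cs.simple i), mul_inv_rev, cs.inv_simple, hwi]

lemma isReduced_of (x : W) : ∃ ω : List B, cs.IsReduced ω ∧ cs.wordProd ω = x ∧
    ω.length = cs.length x := by
  obtain ⟨ω, hlen, hprod⟩ := cs.exists_reduced_word x
  exact ⟨ω, hlen, hprod.symm, by rw [hprod]; exact hlen.symm⟩

lemma not_mem_ris {ω : List B} (hred : cs.IsReduced ω) {t : W}
    (h : ¬ cs.length (cs.wordProd ω * t) < cs.length (cs.wordProd ω)) :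
    t ∉ cs.rightInvSeq ω := fun hmem =>
  h (cs.isRightInversion_of_mem_rightInvSeq hred hmem).2

/-- Key exchange-type lemma: if `w` is an involution not commuting with `s i`,
then `ℓ(s w s) ≠ ℓ(w)`. -/
lemma conj_length_ne {w : W} (hw : w * w = 1) {i : B}
    (hc : cs.simple i * w ≠ w * cs.simple i) :
    cs.length (cs.simple i * w * cs.simple i) ≠ cs.length w := by
  intro h
  have hwi : w⁻¹ = w := inv_eq_of_mul_eq_one_left hw
  have hws : cs.length (w * cs.simple i) = cs.length (cs.simple i * w) :=
    length_ws_eq_sw cs hw i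
  rcases cs.length_simple_mul w i with hA | hB
  · -- ℓ(sw) = ℓ(w) + 1
    obtain ⟨ω₁, hred1, hπ1, hlen1⟩ := isReduced_of cs w
    obtain ⟨ω₂, hred2, hπ2, hlen2⟩ := isReduced_of cs (cs.simple i * w * cs.simple i)
    have hπeq : cs.wordProd (i :: ω₁) = cs.wordProd (ω₂.concat i) := by
      rw [cs.wordProd_cons, cs.wordProd_concat, hπ1, hπ2,
        cs.simple_mul_simple_cancel_right]
    have hs := sgn_invariant cs hπeq (cs.simple i)
    rw [rightInvSeq_cons] at hs
    have hx : (cs.wordProd ω₁)⁻¹ * cs.simple i * cs.wordProd ω₁ ≠ cs.simple i := by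
      rw [hπ1, hwi]
      intro hcon
      apply hc
      have h2 : cs.simple i * w = (w * cs.simple i * w) * w := by
        nth_rewrite 1 [← hcon]; rfl
      rw [h2, mul_assoc, hw, mul_one]
    rw [sgn_cons_ne _ hx,
      sgn_of_not_mem (not_mem_ris cs hred1 (by rw [hπ1]; omega))] at hs
    rw [CoxeterSystem.rightInvSeq_concat, List.concat_eq_append, sgn_append,
      sgn_map_conj, cs.inv_simple, cs.simple_mul_simple_self, one_mul,
      sgn_of_not_mem (not_mem_ris cs hred2 (by
        rw [hπ2, cs.simple_mul_simple_cancel_right, h]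
        omega)),
      sgn_singleton_eq rfl, one_mul] at hs
    exact absurd hs (by decide)
  · -- ℓ(sw) + 1 = ℓ(w)
    obtain ⟨ω₁, hred1, hπ1, hlen1⟩ := isReduced_of cs (cs.simple i * w)
    obtain ⟨ω₂, hred2, hπ2, hlen2⟩ := isReduced_of cs (w * cs.simple i)
    have hπeq : cs.wordProd (i :: ω₁) = cs.wordProd (ω₂.concat i) := by
      rw [cs.wordProd_cons, cs.wordProd_concat, hπ1, hπ2,
        cs.simple_mul_simple_cancel_left, cs.simple_mul_simple_cancel_right]
    set t : W := w * cs.simple i * w with ht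
    have hs := sgn_invariant cs hπeq t
    rw [rightInvSeq_cons] at hs
    have hx : (cs.wordProd ω₁)⁻¹ * cs.simple i * cs.wordProd ω₁ = t := by
      rw [hπ1, mul_inv_rev, cs.inv_simple, hwi, ht]
      simp [mul_assoc, cs.simple_mul_simple_cancel_left]
    have hmem1 : t ∉ cs.rightInvSeq ω₁ := by
      apply not_mem_ris cs hred1
      rw [hπ1, ht]
      have : cs.simple i * w * (w * cs.simple i * w) = w := by
        calc cs.simple i * w * (w * cs.simple i * w)
            = cs.simple i * (w * w) * cs.simple i * w := by group
          _ = w := by rw [hw]; simp [cs.simple_mul_simple_cancel_left]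
      rw [this]
      omega
    rw [sgn_cons_eq _ hx, sgn_of_not_mem hmem1] at hs
    have hww : ∀ x : W, w * (w * x) = x := fun x => by rw [← mul_assoc, hw, one_mul]
    have hts : cs.simple i ≠ t := by
      intro hcon
      apply hc
      have h2 : cs.simple i * w = (w * cs.simple i * w) * w := by
        nth_rewrite 1 [hcon]; rw [ht]
      rw [h2, mul_assoc, hw, mul_one]
    rw [CoxeterSystem.rightInvSeq_concat, List.concat_eq_append, sgn_append,
      sgn_map_conj, cs.inv_simple] at hs
    have hsingle : sgn t [cs.simple i] = 1 := by
      rw [show [cs.simple i] = cs.simple i :: ([] : List W) from rfl, sgn_cons_ne _ hts, sgn_nil]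
    have hmem2 : cs.simple i * t * cs.simple i ∉ cs.rightInvSeq ω₂ := by
      apply not_mem_ris cs hred2
      rw [hπ2]
      have hid : w * cs.simple i * (cs.simple i * t * cs.simple i)
          = cs.simple i * w * cs.simple i := by
        rw [ht]
        simp [mul_assoc, hww, cs.simple_mul_simple_cancel_left]
      rw [hid, h, hws]
      omega
    rw [sgn_of_not_mem hmem2, hsingle, one_mul] at hs
    exact absurd hs (by decide)

lemma length_sws_of_gt {w : W} (hw : w * w = 1) {i : B}
    (hc : cs.simple i * w ≠ w * cs.simple i)
    (hlt : cs.length w < cs.length (cs.simple i * w)) :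
    cs.length (cs.simple i * w * cs.simple i) = cs.length w + 2 := by
  have hA : cs.length (cs.simple i * w) = cs.length w + 1 := by
    rcases cs.length_simple_mul w i with h | h <;> omega
  rcases cs.length_mul_simple (cs.simple i * w) i with h | h
  · omega
  · exfalso; exact conj_length_ne cs hw hc (by omega)

lemma length_sws_of_lt {w : W} (hw : w * w = 1) {i : B}
    (hc : cs.simple i * w ≠ w * cs.simple i)
    (hlt : cs.length (cs.simple i * w) < cs.length w) :
    cs.length (cs.simple i * w * cs.simple i) + 2 = cs.length w := by
  have hB : cs.length (cs.simple i * w) + 1 = cs.length w := by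
    rcases cs.length_simple_mul w i with h | h <;> omega
  rcases cs.length_mul_simple (cs.simple i * w) i with h | h
  · exfalso; exact conj_length_ne cs hw hc (by omega)
  · omega

end HeckeAux

open HeckeAux

/-- the quadratic relation `T_s² = (u²-1)T_s + u²` for the operators `T_s` on the
free `ℤ[u,u⁻¹]`-module `M` with basis `(a_w)` indexed by the involutions of `W`, where
`(T_s+1)a_w = (u+1)(a_w+a_{sw})` if `sw = ws > w`, `(u²-u)(a_w+a_{sw})` if `sw = ws < w`,
`a_w + a_{sws}` if `sw ≠ ws > w`, and `u²(a_w+a_{sws})` if `sw ≠ ws < w`.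
Here `u = T 1` in `ℤ[T;T⁻¹]`, and `M` is realized as the span of the `a_w`, `w` an involution. -/
theorem hecke_module_quadratic_relation {B W : Type*} [Group W] {M : CoxeterMatrix B}
    (cs : CoxeterSystem M W)
    (Ts : B → Module.End (LaurentPolynomial ℤ) (W →₀ LaurentPolynomial ℤ))
    (h1 : ∀ (i : B) (w : W), w * w = 1 →
      cs.simple i * w = w * cs.simple i →
      cs.length w < cs.length (cs.simple i * w) →
      Ts i (single w 1) + single w 1 =
        (T 1 + 1 : LaurentPolynomial ℤ) • (single w 1 + single (cs.simple i * w) 1))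
    (h2 : ∀ (i : B) (w : W), w * w = 1 →
      cs.simple i * w = w * cs.simple i →
      cs.length (cs.simple i * w) < cs.length w →
      Ts i (single w 1) + single w 1 =
        (T 2 - T 1 : LaurentPolynomial ℤ) • (single w 1 + single (cs.simple i * w) 1))
    (h3 : ∀ (i : B) (w : W), w * w = 1 →
      cs.simple i * w ≠ w * cs.simple i →
      cs.length w < cs.length (cs.simple i * w) →
      Ts i (single w 1) + single w 1 =
        single w 1 + single (cs.simple i * w * cs.simple i) 1)
    (h4 : ∀ (i : B) (w : W), w * w = 1 →
      cs.simple i * w ≠ w * cs.simple i →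
      cs.length (cs.simple i * w) < cs.length w →
      Ts i (single w 1) + single w 1 =
        (T 2 : LaurentPolynomial ℤ) • (single w 1 + single (cs.simple i * w * cs.simple i) 1)) :
    ∀ (i : B) (m : W →₀ LaurentPolynomial ℤ),
      m ∈ Submodule.span (LaurentPolynomial ℤ)
        (Set.range (fun w : {w : W // w * w = 1} => single (w : W) (1 : LaurentPolynomial ℤ))) →
      Ts i (Ts i m) = (T 2 - 1 : LaurentPolynomial ℤ) • Ts i m
        + (T 2 : LaurentPolynomial ℤ) • m := by
  intro i m hm
  have hT2 : (T 2 : LaurentPolynomial ℤ) = T 1 * T 1 := by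
    rw [← T_add]; norm_num
  induction hm using Submodule.span_induction with
  | zero => simp
  | add x y hx hy ihx ihy =>
    rw [map_add, map_add, ihx, ihy, smul_add, smul_add]
    abel
  | smul a x hx ihx =>
    rw [map_smul, map_smul, ihx, smul_add, smul_comm a, smul_comm a]
  | mem x hmem =>
    obtain ⟨⟨w, hw⟩, rfl⟩ := hmem
    simp only
    have hwi : w⁻¹ = w := inv_eq_of_mul_eq_one_left hw
    have hww : ∀ x : W, w * (w * x) = x := fun x => by rw [← mul_assoc, hw, one_mul]
    have hws : cs.length (w * cs.simple i) = cs.length (cs.simple i * w) :=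
      length_ws_eq_sw cs hw i
    by_cases hc : cs.simple i * w = w * cs.simple i
    · -- commuting case
      have hsb : cs.simple i * (cs.simple i * w) = w := cs.simple_mul_simple_cancel_left i
      have hb : (cs.simple i * w) * (cs.simple i * w) = 1 := by
        calc (cs.simple i * w) * (cs.simple i * w)
            = cs.simple i * (w * cs.simple i) * w := by group
          _ = cs.simple i * (cs.simple i * w) * w := by rw [← hc]
          _ = 1 := by rw [cs.simple_mul_simple_cancel_left, hw]
      have hbc : cs.simple i * (cs.simple i * w) = (cs.simple i * w) * cs.simple i := by
        rw [hsb, hc, mul_assoc, cs.simple_mul_simple_self, mul_one]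
      rcases cs.length_simple_mul w i with hA | hB
      · -- sw > w
        have hTw := h1 i w hw hc (by omega)
        have hTb := h2 i (cs.simple i * w) hb hbc (by rw [hsb]; omega)
        rw [hsb] at hTb
        have hTw' := eq_sub_of_add_eq hTw
        have hTb' := eq_sub_of_add_eq hTb
        rw [hTw', map_sub, map_smul, map_add, hTw', hTb', hT2]
        module
      · -- sw < w
        have hTw := h2 i w hw hc (by omega)
        have hTb := h1 i (cs.simple i * w) hb hbc (by rw [hsb]; omega)
        rw [hsb] at hTb
        have hTw' := eq_sub_of_add_eq hTw
        have hTb' := eq_sub_of_add_eq hTb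
        rw [hTw', map_sub, map_smul, map_add, hTw', hTb', hT2]
        module
    · -- noncommuting case
      have hcc : (cs.simple i * w * cs.simple i) * (cs.simple i * w * cs.simple i) = 1 := by
        simp [mul_assoc, cs.simple_mul_simple_cancel_left, hww, cs.simple_mul_simple_self]
      have hsc : cs.simple i * (cs.simple i * w * cs.simple i) = w * cs.simple i := by
        rw [← mul_assoc, ← mul_assoc, cs.simple_mul_simple_self, one_mul]
      have hcs : (cs.simple i * w * cs.simple i) * cs.simple i = cs.simple i * w :=
        cs.simple_mul_simple_cancel_right i
      have hscs : cs.simple i * (cs.simple i * w * cs.simple i) * cs.simple i = w := by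
        rw [hsc, mul_assoc, cs.simple_mul_simple_self, mul_one]
      have hcnc : cs.simple i * (cs.simple i * w * cs.simple i)
          ≠ (cs.simple i * w * cs.simple i) * cs.simple i := by
        rw [hsc, hcs]
        exact fun hcon => hc hcon.symm
      rcases cs.length_simple_mul w i with hA | hB
      · -- sw > w
        have hl2 : cs.length (cs.simple i * w * cs.simple i) = cs.length w + 2 :=
          length_sws_of_gt cs hw hc (by omega)
        have hTw := h3 i w hw hc (by omega)
        have hTc := h4 i (cs.simple i * w * cs.simple i) hcc hcnc
          (by rw [hsc, hws]; omega)
        rw [hscs] at hTc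
        have hTw' := eq_sub_of_add_eq hTw
        have hTc' := eq_sub_of_add_eq hTc
        rw [hTw', map_sub, map_add, hTw', hTc', hT2]
        module
      · -- sw < w
        have hl2 : cs.length (cs.simple i * w * cs.simple i) + 2 = cs.length w :=
          length_sws_of_lt cs hw hc (by omega)
        have hTw := h4 i w hw hc (by omega)
        have hTc := h3 i (cs.simple i * w * cs.simple i) hcc hcnc
          (by rw [hsc, hws]; omega)
        rw [hscs] at hTc
        have hTw' := eq_sub_of_add_eq hTw
        have hTc' := eq_sub_of_add_eq hTc
        rw [hTw', map_sub, map_smul, map_add, hTw', hTc', hT2]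
        module
end

section
/- Let W be a Weyl group of rank 2 (dihedral Weyl group) with simple reflections s, t, let I be its set of involutions, and let M be the free ℤ[u,u⁻¹]-module with basis (a_w)_{w∈I} with operators T_s, T_t defined as in the Hecke module structure: (T_r+1)(a_w) = (u+1)(a_w + a_{rw}) if rw = wr > w; (T_r+1)(a_w) = (u²-u)(a_w + a_{rw}) if rw = wr < w; (T_r+1)(a_w) = a_w + a_{rwr} if rw ≠ wr > w; (T_r+1)(a_w) = u²(a_w + a_{rwr}) if rw ≠ wr < w, for r ∈ {s,t}. If st has order k in W, then the braid relation T_s T_t T_s ⋯ = T_t T_s T_t ⋯ (k factors on each side) holds as operators on M. -/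
open Finsupp LaurentPolynomial CoxeterSystem DihedralGroup


namespace HB

/-- dihedral length function -/
def NN (k : ℕ) : DihedralGroup k → ℕ
  | .r m => min (2 * m.val) (2 * (k - m.val))
  | .sr m => min (2 * (-m).val + 1) (2 * (k - (-m).val) - 1)

variable {W : Type*} [Group W] {M : CoxeterMatrix (Fin 2)} (cs : CoxeterSystem M W)

lemma r_pow (k : ℕ) (c : ZMod k) (m : ℕ) : (DihedralGroup.r c) ^ m = .r (m * c) := by
  induction m with
  | zero => simp
  | succ n ih => rw [pow_succ, ih, r_mul_r]; congr 1; push_cast; ring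

lemma exists_hom (k : ℕ) (hk : orderOf (cs.simple 0 * cs.simple 1) = k) :
    ∃ f : W →* DihedralGroup k, ∀ i : Fin 2, f (cs.simple i) = sr (i.val : ZMod k) := by
  have hdvd : k ∣ M 0 1 := hk ▸ orderOf_dvd_of_pow_eq_one (cs.simple_mul_simple_pow 0 1)
  have hcast : ((M 0 1 : ℕ) : ZMod k) = 0 := (ZMod.natCast_eq_zero_iff _ _).mpr hdvd
  have hcast' : ((M 1 0 : ℕ) : ZMod k) = 0 := by rw [M.symmetric 1 0]; exact hcast
  have hlift : M.IsLiftable (fun i : Fin 2 => (sr (i.val : ZMod k) : DihedralGroup k)) := by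
    intro i i'
    fin_cases i <;> fin_cases i' <;>
      simp only [sr_mul_sr, r_pow] <;> rw [one_def] <;> congr 1 <;>
      push_cast [hcast, hcast', M.diagonal] <;> ring
  exact ⟨cs.lift ⟨_, hlift⟩, fun i => cs.lift_apply_simple hlift i⟩

lemma length_lb {k : ℕ} (f : W →* DihedralGroup k)
    (hf : ∀ i : Fin 2, f (cs.simple i) = sr (i.val : ZMod k))
    (hLip : ∀ (d : DihedralGroup k) (i : Fin 2), NN k (sr (i.val : ZMod k) * d) ≤ NN k d + 1)
    (w : W) : NN k (f w) ≤ cs.length w := by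
  obtain ⟨ω, hlen, rfl⟩ := cs.exists_reduced_word w
  rw [hlen.eq]
  clear hlen
  induction ω with
  | nil => simp [NN, one_def, -r_zero]
  | cons i ω ih =>
      rw [cs.wordProd_cons, map_mul, hf]
      calc NN k (sr (i.val : ZMod k) * f (cs.wordProd ω)) ≤ NN k (f (cs.wordProd ω)) + 1 :=
            hLip _ i
        _ ≤ ω.length + 1 := by omega
        _ = (i :: ω).length := by simp

lemma length_eq {k : ℕ} (f : W →* DihedralGroup k)
    (hf : ∀ i : Fin 2, f (cs.simple i) = sr (i.val : ZMod k))
    (hLip : ∀ (d : DihedralGroup k) (i : Fin 2), NN k (sr (i.val : ZMod k) * d) ≤ NN k d + 1)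
    (x : W) (ω : List (Fin 2)) (hx : x = cs.wordProd ω)
    (hN : NN k (f x) = ω.length) : cs.length x = ω.length := by
  refine le_antisymm (hx ▸ cs.length_wordProd_le ω) (hN ▸ length_lb cs f hf hLip x)

end HB

namespace HB2
variable {W : Type*} [Group W] {M : CoxeterMatrix (Fin 2)} (cs : CoxeterSystem M W)

local notation "s" => cs.simple 0
local notation "t" => cs.simple 1
local notation "z" => cs.simple 0 * cs.simple 1
local prefix:100 "π" => cs.wordProd

lemma hs : s * s = 1 := cs.simple_mul_simple_self 0
lemma ht : t * t = 1 := cs.simple_mul_simple_self 1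
lemma hzt : z * t = s := by rw [mul_assoc, ht, mul_one]
lemma hts : t * s = z⁻¹ := by rw [mul_inv_rev, cs.inv_simple, cs.inv_simple]
lemma ht' : t = s * z := by rw [← mul_assoc, hs, one_mul]
lemma tmul (x : W) : t * x = s * (z * x) := by rw [← mul_assoc, ← ht']
lemma hsz : s * z = z⁻¹ * s := by
  have h1 : s * z = t := by rw [← mul_assoc, hs, one_mul]
  have h2 : z⁻¹ * s = t := by rw [← hts, mul_assoc, hs, mul_one]
  rw [h1, h2]
lemma hpow (n : ℕ) : s * z ^ n = (z ^ n)⁻¹ * s := by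
  have h : SemiconjBy s z z⁻¹ := hsz cs
  have h2 := (h.pow_right n).eq
  rwa [inv_pow] at h2
lemma Linv (a : ℕ) : s * (z ^ a * s) = (z ^ a)⁻¹ := by
  rw [← mul_assoc, hpow, mul_assoc, hs, mul_one]
lemma pI (a : ℕ) : (z ^ a * s) * (z ^ a * s) = 1 := by
  rw [mul_assoc, Linv, mul_inv_cancel]
lemma tpow (a : ℕ) : t * z ^ a = (z ^ (a+1))⁻¹ * s := by
  rw [tmul, ← pow_succ', hpow]

section klem
variable {k : ℕ} (hk : orderOf (cs.simple 0 * cs.simple 1) = k)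
include hk

lemma hzk : z ^ k = 1 := hk ▸ pow_orderOf_eq_one _

lemma zpinv {a b : ℕ} (h : a + b = k) : (z ^ a)⁻¹ = z ^ b :=
  inv_eq_of_mul_eq_one_right (by rw [← pow_add, h, hzk cs hk])

lemma L1 {a b : ℕ} (h : a + b = k) : s * (z ^ a * s) = z ^ b := by
  rw [Linv, zpinv cs hk h]
lemma L2 {a b : ℕ} (h : a + b = k) : s * z ^ a = z ^ b * s := by
  rw [hpow, zpinv cs hk h]
lemma L4 {a b : ℕ} (h : a + b + 1 = k) : t * z ^ a = z ^ b * s := by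
  rw [tpow, zpinv cs hk (show (a+1) + b = k by omega)]
lemma L3 {a b : ℕ} (h : a + b + 1 = k) : t * (z ^ a * s) = z ^ b := by
  rw [← mul_assoc, L4 cs hk h, mul_assoc, hs, mul_one]

omit hk in
lemma R1 (a : ℕ) : (z ^ a * s) * s = z ^ a := by rw [mul_assoc, hs, mul_one]
omit hk in
lemma R2 (a : ℕ) : (z ^ a * s) * t = z ^ (a + 1) := by rw [mul_assoc, ← pow_succ]
omit hk in
lemma R3 (a : ℕ) : z ^ (a + 1) * t = z ^ a * s := by rw [pow_succ, mul_assoc, hzt]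

lemma ht2 {a : ℕ} (h : a + 1 = k) : z ^ a * s = t := by
  have h3 := R3 cs a
  rw [h, hzk cs hk, one_mul] at h3
  exact h3.symm

lemma zne {a b : ℕ} (ha : a < k) (hb : b < k) (hab : a ≠ b) : z ^ a ≠ z ^ b := by
  wlog hlt : a < b generalizing a b
  · exact (this hb ha (Ne.symm hab) (by omega)).symm
  intro heq
  have h1 : z ^ (b - a) * z ^ a = 1 * z ^ a := by
    rw [← pow_add, show b - a + a = b by omega, one_mul, heq]
  have h2 : z ^ (b - a) = 1 := mul_right_cancel h1
  have h3 : k ∣ (b - a) := hk ▸ orderOf_dvd_of_pow_eq_one h2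
  have := Nat.le_of_dvd (by omega) h3
  omega

lemma zsne {a b : ℕ} (ha : a < k) (hb : b < k) (hab : a ≠ b) : z ^ a * s ≠ z ^ b * s := by
  intro heq
  exact zne cs hk ha hb hab (mul_right_cancel heq)

end klem

/-- word lists -/
def ll : ℕ → List (Fin 2)
  | 0 => []
  | a + 1 => 0 :: 1 :: ll a

def lt' : ℕ → List (Fin 2)
  | 0 => []
  | a + 1 => 1 :: 0 :: lt' a

@[simp] lemma ll_length (a : ℕ) : (ll a).length = 2 * a := by
  induction a with
  | zero => rfl
  | succ n ih => simp [ll, ih]; omega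

@[simp] lemma lt'_length (a : ℕ) : (lt' a).length = 2 * a := by
  induction a with
  | zero => rfl
  | succ n ih => simp [lt', ih]; omega

lemma z_eq_ll (a : ℕ) : z ^ a = π (ll a) := by
  induction a with
  | zero => simp [ll]
  | succ n ih =>
      rw [ll, cs.wordProd_cons, cs.wordProd_cons, ← ih, ← mul_assoc, ← pow_succ']

lemma zinv_eq_lt' (a : ℕ) : (z ^ a)⁻¹ = π (lt' a) := by
  induction a with
  | zero => simp [lt']
  | succ n ih =>
      rw [lt', cs.wordProd_cons, cs.wordProd_cons, ← ih, ← mul_assoc, hts,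
        pow_succ, mul_inv_rev]

lemma zs_eq_word (a : ℕ) : z ^ a * s = π (ll a ++ [0]) := by
  rw [cs.wordProd_append, ← z_eq_ll, cs.wordProd_cons, cs.wordProd_nil, mul_one]

section klem2
variable {k : ℕ} (hk : orderOf (cs.simple 0 * cs.simple 1) = k)
include hk

lemma zrot_eq_word {a b : ℕ} (h : a + b = k) : z ^ a = π (lt' b) := by
  have h1 : (z ^ b)⁻¹ = z ^ a := zpinv cs hk (by omega)
  rw [← h1, zinv_eq_lt']

lemma zs_eq_word' {a b : ℕ} (h : a + b + 1 = k) : z ^ b * s = π (lt' a ++ [1]) := by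
  rw [cs.wordProd_append, ← zinv_eq_lt', cs.wordProd_cons, cs.wordProd_nil, mul_one,
    eq_inv_mul_iff_mul_eq, ← mul_assoc, ← pow_add, show a + b = k - 1 by omega]
  exact ht2 cs hk (by omega)

lemma classify (hkpos : 0 < k) (w : W) : ∃ j, j < k ∧ (w = z ^ j ∨ w = z ^ j * s) := by
  induction w using cs.simple_induction_left with
  | one => exact ⟨0, hkpos, Or.inl (by simp)⟩
  | mul_simple_left w i ih =>
      obtain ⟨j, hj, hw | hw⟩ := ih <;> subst hw <;> fin_cases i
      · rcases Nat.eq_zero_or_pos j with rfl | hjpos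
        · exact ⟨0, hkpos, Or.inr (by simp)⟩
        · exact ⟨k - j, by omega, Or.inr (L2 cs hk (by omega))⟩
      · exact ⟨k - j - 1, by omega, Or.inr (L4 cs hk (by omega))⟩
      · rcases Nat.eq_zero_or_pos j with rfl | hjpos
        · refine ⟨0, hkpos, Or.inl ?_⟩
          simp only [pow_zero, one_mul, mul_one]
          exact hs cs
        · exact ⟨k - j, by omega, Or.inl (L1 cs hk (by omega))⟩
      · exact ⟨k - j - 1, by omega, Or.inl (L3 cs hk (by omega))⟩

end klem2
end HB2

namespace HB3
section MK
variable {V : Type*} [AddCommGroup V] [Module (LaurentPolynomial ℤ) V]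
local notation "u" => (T 1 : LaurentPolynomial ℤ)

lemma hT2 : (T 2 : LaurentPolynomial ℤ) = T 1 * T 1 := by
  rw [← T_add]; norm_num

lemma mk1 {x y Tx : V} (h : Tx + x = (T 1 + 1 : LaurentPolynomial ℤ) • (x + y)) :
    Tx = u • x + (u + 1) • y := by
  rw [eq_sub_of_add_eq h]; module

lemma mk2 {x y Tx : V} (h : Tx + x = (T 2 - T 1 : LaurentPolynomial ℤ) • (x + y)) :
    Tx = (u * u - u - 1) • x + (u * u - u) • y := by
  rw [eq_sub_of_add_eq h, hT2]; module

lemma mk3 {x y Tx : V} (h : Tx + x = x + y) : Tx = y := by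
  have h2 := eq_sub_of_add_eq h; rw [h2]; abel

lemma mk4 {x y Tx : V} (h : Tx + x = (T 2 : LaurentPolynomial ℤ) • (x + y)) :
    Tx = (u * u - 1) • x + (u * u) • y := by
  rw [eq_sub_of_add_eq h, hT2]; module

end MK

section Alg
variable {R : Type*} [CommRing R] {V : Type*} [AddCommGroup V] [Module R V]
variable (u : R) (F G : Module.End R V)

theorem alg2 (b c p0 p1 : V)
    (hFb : F b = u • b + (u + 1) • p0)
    (hFc : F c = (u * u - u - 1) • c + (u * u - u) • p1)
    (hFp0 : F p0 = (u * u - u - 1) • p0 + (u * u - u) • b)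
    (hFp1 : F p1 = u • p1 + (u + 1) • c)
    (hGb : G b = u • b + (u + 1) • p1)
    (hGc : G c = (u * u - u - 1) • c + (u * u - u) • p0)
    (hGp1 : G p1 = (u * u - u - 1) • p1 + (u * u - u) • b)
    (hGp0 : G p0 = u • p0 + (u + 1) • c) :
    F (G b) = G (F b) ∧ F (G c) = G (F c) ∧ F (G p0) = G (F p0) ∧ F (G p1) = G (F p1) := by
  refine ⟨?_, ?_, ?_, ?_⟩ <;>
    simp only [hFb, hFc, hFp0, hFp1, hGb, hGc, hGp0, hGp1, map_add, map_smul,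
      smul_add, smul_smul] <;> module

theorem alg3 (b p0 p1 p2 : V)
    (hFb : F b = u • b + (u + 1) • p0)
    (hFp0 : F p0 = (u * u - u - 1) • p0 + (u * u - u) • b)
    (hFp1 : F p1 = (u * u - 1) • p1 + (u * u) • p2)
    (hFp2 : F p2 = p1)
    (hGb : G b = u • b + (u + 1) • p2)
    (hGp2 : G p2 = (u * u - u - 1) • p2 + (u * u - u) • b)
    (hGp0 : G p0 = p1)
    (hGp1 : G p1 = (u * u - 1) • p1 + (u * u) • p0) :
    F (G (F b)) = G (F (G b)) ∧ F (G (F p0)) = G (F (G p0)) ∧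
      F (G (F p1)) = G (F (G p1)) ∧ F (G (F p2)) = G (F (G p2)) := by
  refine ⟨?_, ?_, ?_, ?_⟩ <;>
    simp only [hFb, hFp0, hFp1, hFp2, hGb, hGp0, hGp1, hGp2, map_add, map_smul,
      smul_add, smul_smul] <;> module

theorem alg4 (b c p0 p1 p2 p3 : V)
    (hFb : F b = u • b + (u + 1) • p0)
    (hFc : F c = (u * u - u - 1) • c + (u * u - u) • p2)
    (hFp0 : F p0 = (u * u - u - 1) • p0 + (u * u - u) • b)
    (hFp1 : F p1 = (u * u - 1) • p1 + (u * u) • p3)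
    (hFp2 : F p2 = u • p2 + (u + 1) • c)
    (hFp3 : F p3 = p1)
    (hGb : G b = u • b + (u + 1) • p3)
    (hGc : G c = (u * u - u - 1) • c + (u * u - u) • p1)
    (hGp0 : G p0 = p2)
    (hGp1 : G p1 = u • p1 + (u + 1) • c)
    (hGp2 : G p2 = (u * u - 1) • p2 + (u * u) • p0)
    (hGp3 : G p3 = (u * u - u - 1) • p3 + (u * u - u) • b) :
    F (G (F (G b))) = G (F (G (F b))) ∧ F (G (F (G c))) = G (F (G (F c))) ∧
      F (G (F (G p0))) = G (F (G (F p0))) ∧ F (G (F (G p1))) = G (F (G (F p1))) ∧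
      F (G (F (G p2))) = G (F (G (F p2))) ∧ F (G (F (G p3))) = G (F (G (F p3))) := by
  refine ⟨?_, ?_, ?_, ?_, ?_, ?_⟩ <;>
    simp only [hFb, hFc, hFp0, hFp1, hFp2, hFp3, hGb, hGc, hGp0, hGp1, hGp2, hGp3,
      map_add, map_smul, smul_add, smul_smul] <;> module

theorem alg6 (b c p0 p1 p2 p3 p4 p5 : V)
    (hFb : F b = u • b + (u + 1) • p0)
    (hFc : F c = (u * u - u - 1) • c + (u * u - u) • p3)
    (hFp0 : F p0 = (u * u - u - 1) • p0 + (u * u - u) • b)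
    (hFp1 : F p1 = (u * u - 1) • p1 + (u * u) • p5)
    (hFp2 : F p2 = (u * u - 1) • p2 + (u * u) • p4)
    (hFp3 : F p3 = u • p3 + (u + 1) • c)
    (hFp4 : F p4 = p2)
    (hFp5 : F p5 = p1)
    (hGb : G b = u • b + (u + 1) • p5)
    (hGc : G c = (u * u - u - 1) • c + (u * u - u) • p2)
    (hGp0 : G p0 = p4)
    (hGp1 : G p1 = p3)
    (hGp2 : G p2 = u • p2 + (u + 1) • c)
    (hGp3 : G p3 = (u * u - 1) • p3 + (u * u) • p1)
    (hGp4 : G p4 = (u * u - 1) • p4 + (u * u) • p0)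
    (hGp5 : G p5 = (u * u - u - 1) • p5 + (u * u - u) • b) :
    F (G (F (G (F (G b))))) = G (F (G (F (G (F b))))) ∧
      F (G (F (G (F (G c))))) = G (F (G (F (G (F c))))) ∧
      F (G (F (G (F (G p0))))) = G (F (G (F (G (F p0))))) ∧
      F (G (F (G (F (G p1))))) = G (F (G (F (G (F p1))))) ∧
      F (G (F (G (F (G p2))))) = G (F (G (F (G (F p2))))) ∧
      F (G (F (G (F (G p3))))) = G (F (G (F (G (F p3))))) ∧
      F (G (F (G (F (G p4))))) = G (F (G (F (G (F p4))))) ∧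
      F (G (F (G (F (G p5))))) = G (F (G (F (G (F p5))))) := by
  refine ⟨?_, ?_, ?_, ?_, ?_, ?_, ?_, ?_⟩ <;>
    simp only [hFb, hFc, hFp0, hFp1, hFp2, hFp3, hFp4, hFp5,
      hGb, hGc, hGp0, hGp1, hGp2, hGp3, hGp4, hGp5,
      map_add, map_smul, smul_add, smul_smul] <;> module

end Alg
end HB3
namespace HBM
open HB HB2 HB3

variable {W : Type*} [Group W] {M : CoxeterMatrix (Fin 2)} (cs : CoxeterSystem M W)
variable (Top : Fin 2 → Module.End (LaurentPolynomial ℤ) (W →₀ LaurentPolynomial ℤ))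

local notation "s" => cs.simple 0
local notation "t" => cs.simple 1
local notation "z" => cs.simple 0 * cs.simple 1
local notation "u" => (T 1 : LaurentPolynomial ℤ)
local prefix:100 "π" => cs.wordProd
local prefix:100 "ℓ" => cs.length

variable
    (h1 : ∀ (i : Fin 2) (w : W), w * w = 1 →
      cs.simple i * w = w * cs.simple i →
      cs.length w < cs.length (cs.simple i * w) →
      Top i (single w 1) + single w 1 =
        (T 1 + 1 : LaurentPolynomial ℤ) • (single w 1 + single (cs.simple i * w) 1))
    (h2 : ∀ (i : Fin 2) (w : W), w * w = 1 →
      cs.simple i * w = w * cs.simple i →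
      cs.length (cs.simple i * w) < cs.length w →
      Top i (single w 1) + single w 1 =
        (T 2 - T 1 : LaurentPolynomial ℤ) • (single w 1 + single (cs.simple i * w) 1))
    (h3 : ∀ (i : Fin 2) (w : W), w * w = 1 →
      cs.simple i * w ≠ w * cs.simple i →
      cs.length w < cs.length (cs.simple i * w) →
      Top i (single w 1) + single w 1 =
        single w 1 + single (cs.simple i * w * cs.simple i) 1)
    (h4 : ∀ (i : Fin 2) (w : W), w * w = 1 →
      cs.simple i * w ≠ w * cs.simple i →
      cs.length (cs.simple i * w) < cs.length w →
      Top i (single w 1) + single w 1 =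
        (T 2 : LaurentPolynomial ℤ) • (single w 1 + single (cs.simple i * w * cs.simple i) 1))

include h1 h2 h3 h4

set_option maxHeartbeats 1000000 in
theorem master6 (hk : orderOf (cs.simple 0 * cs.simple 1) = 6) (w : W) (hw : w * w = 1) :
    Top 0 (Top 1 (Top 0 (Top 1 (Top 0 (Top 1 (single w 1)))))) =
      Top 1 (Top 0 (Top 1 (Top 0 (Top 1 (Top 0 (single w 1)))))) := by
  obtain ⟨f, hf⟩ := exists_hom cs 6 hk
  have hLip : ∀ (d : DihedralGroup 6) (i : Fin 2),
      NN 6 (sr (i.val : ZMod 6) * d) ≤ NN 6 d + 1 := by decide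
  -- length facts
  have lz1 : ℓ (z ^ 1) = 2 := by
    have := length_eq cs f hf hLip (z ^ 1) (ll 1) (z_eq_ll cs 1)
      (by simp only [map_pow, map_mul, hf]; decide)
    simpa using this
  have lz2 : ℓ (z ^ 2) = 4 := by
    have := length_eq cs f hf hLip (z ^ 2) (ll 2) (z_eq_ll cs 2)
      (by simp only [map_pow, map_mul, hf]; decide)
    simpa using this
  have lz3 : ℓ (z ^ 3) = 6 := by
    have := length_eq cs f hf hLip (z ^ 3) (ll 3) (z_eq_ll cs 3)
      (by simp only [map_pow, map_mul, hf]; decide)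
    simpa using this
  have lz4 : ℓ (z ^ 4) = 4 := by
    have := length_eq cs f hf hLip (z ^ 4) (lt' 2) (zrot_eq_word cs hk (by norm_num))
      (by simp only [map_pow, map_mul, hf]; decide)
    simpa using this
  have lz5 : ℓ (z ^ 5) = 2 := by
    have := length_eq cs f hf hLip (z ^ 5) (lt' 1) (zrot_eq_word cs hk (by norm_num))
      (by simp only [map_pow, map_mul, hf]; decide)
    simpa using this
  have lq0 : ℓ (z ^ 0 * s) = 1 := by
    have := length_eq cs f hf hLip (z ^ 0 * s) (ll 0 ++ [0]) (zs_eq_word cs 0)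
      (by simp only [map_pow, map_mul, hf]; decide)
    simpa using this
  have lq1 : ℓ (z ^ 1 * s) = 3 := by
    have := length_eq cs f hf hLip (z ^ 1 * s) (ll 1 ++ [0]) (zs_eq_word cs 1)
      (by simp only [map_pow, map_mul, hf]; decide)
    simpa using this
  have lq2 : ℓ (z ^ 2 * s) = 5 := by
    have := length_eq cs f hf hLip (z ^ 2 * s) (ll 2 ++ [0]) (zs_eq_word cs 2)
      (by simp only [map_pow, map_mul, hf]; decide)
    simpa using this
  have lq3 : ℓ (z ^ 3 * s) = 5 := by
    have := length_eq cs f hf hLip (z ^ 3 * s) (lt' 2 ++ [1]) (zs_eq_word' cs hk (by norm_num))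
      (by simp only [map_pow, map_mul, hf]; decide)
    simpa using this
  have lq4 : ℓ (z ^ 4 * s) = 3 := by
    have := length_eq cs f hf hLip (z ^ 4 * s) (lt' 1 ++ [1]) (zs_eq_word' cs hk (by norm_num))
      (by simp only [map_pow, map_mul, hf]; decide)
    simpa using this
  have lq5 : ℓ (z ^ 5 * s) = 1 := by
    have := length_eq cs f hf hLip (z ^ 5 * s) (lt' 0 ++ [1]) (zs_eq_word' cs hk (by norm_num))
      (by simp only [map_pow, map_mul, hf]; decide)
    simpa using this
  have l1 : ℓ (1 : W) = 0 := cs.length_one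
  -- eval facts, F = Top 0
  have Fb : Top 0 (single (1 : W) 1) = u • single (1 : W) 1 + (u + 1) • single (z ^ 0 * s) 1 := by
    have e : s * (1 : W) = z ^ 0 * s := by rw [mul_one, pow_zero, one_mul]
    have h := h1 0 1 (one_mul 1) (by rw [mul_one, one_mul]) (by rw [e, l1, lq0]; norm_num)
    rw [e] at h
    exact mk1 h
  have Fc : Top 0 (single (z ^ 3) 1) =
      (u * u - u - 1) • single (z ^ 3) 1 + (u * u - u) • single (z ^ 3 * s) 1 := by
    have e : s * z ^ 3 = z ^ 3 * s := L2 cs hk (by norm_num)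
    have h := h2 0 (z ^ 3) (by rw [← pow_add]; exact hzk cs hk) e
      (by rw [e, lq3, lz3]; norm_num)
    rw [e] at h
    exact mk2 h
  have Fq0 : Top 0 (single (z ^ 0 * s) 1) =
      (u * u - u - 1) • single (z ^ 0 * s) 1 + (u * u - u) • single (1 : W) 1 := by
    have e : s * (z ^ 0 * s) = 1 := by rw [Linv, pow_zero, inv_one]
    have h := h2 0 (z ^ 0 * s) (pI cs 0) (by rw [e, R1, pow_zero]) (by rw [e, l1, lq0]; norm_num)
    rw [e] at h
    exact mk2 h
  have Fq3 : Top 0 (single (z ^ 3 * s) 1) =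
      u • single (z ^ 3 * s) 1 + (u + 1) • single (z ^ 3) 1 := by
    have e : s * (z ^ 3 * s) = z ^ 3 := L1 cs hk (by norm_num)
    have h := h1 0 (z ^ 3 * s) (pI cs 3) (by rw [e, R1]) (by rw [e, lq3, lz3]; norm_num)
    rw [e] at h
    exact mk1 h
  have Fq1 : Top 0 (single (z ^ 1 * s) 1) =
      (u * u - 1) • single (z ^ 1 * s) 1 + (u * u) • single (z ^ 5 * s) 1 := by
    have e : s * (z ^ 1 * s) = z ^ 5 := L1 cs hk (by norm_num)
    have e2 : s * (z ^ 1 * s) * s = z ^ 5 * s := by rw [e]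
    have hne : s * (z ^ 1 * s) ≠ (z ^ 1 * s) * s := by
      rw [e, R1]; exact zne cs hk (by norm_num) (by norm_num) (by norm_num)
    have h := h4 0 (z ^ 1 * s) (pI cs 1) hne (by rw [e, lz5, lq1]; norm_num)
    rw [e2] at h
    exact mk4 h
  have Fq2 : Top 0 (single (z ^ 2 * s) 1) =
      (u * u - 1) • single (z ^ 2 * s) 1 + (u * u) • single (z ^ 4 * s) 1 := by
    have e : s * (z ^ 2 * s) = z ^ 4 := L1 cs hk (by norm_num)
    have e2 : s * (z ^ 2 * s) * s = z ^ 4 * s := by rw [e]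
    have hne : s * (z ^ 2 * s) ≠ (z ^ 2 * s) * s := by
      rw [e, R1]; exact zne cs hk (by norm_num) (by norm_num) (by norm_num)
    have h := h4 0 (z ^ 2 * s) (pI cs 2) hne (by rw [e, lz4, lq2]; norm_num)
    rw [e2] at h
    exact mk4 h
  have Fq4 : Top 0 (single (z ^ 4 * s) 1) = single (z ^ 2 * s) 1 := by
    have e : s * (z ^ 4 * s) = z ^ 2 := L1 cs hk (by norm_num)
    have e2 : s * (z ^ 4 * s) * s = z ^ 2 * s := by rw [e]
    have hne : s * (z ^ 4 * s) ≠ (z ^ 4 * s) * s := by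
      rw [e, R1]; exact zne cs hk (by norm_num) (by norm_num) (by norm_num)
    have h := h3 0 (z ^ 4 * s) (pI cs 4) hne (by rw [e, lz2, lq4]; norm_num)
    rw [e2] at h
    exact mk3 h
  have Fq5 : Top 0 (single (z ^ 5 * s) 1) = single (z ^ 1 * s) 1 := by
    have e : s * (z ^ 5 * s) = z ^ 1 := L1 cs hk (by norm_num)
    have e2 : s * (z ^ 5 * s) * s = z ^ 1 * s := by rw [e]
    have hne : s * (z ^ 5 * s) ≠ (z ^ 5 * s) * s := by
      rw [e, R1]; exact zne cs hk (by norm_num) (by norm_num) (by norm_num)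
    have h := h3 0 (z ^ 5 * s) (pI cs 5) hne (by rw [e, lz1, lq5]; norm_num)
    rw [e2] at h
    exact mk3 h
  -- eval facts, G = Top 1
  have Gb : Top 1 (single (1 : W) 1) = u • single (1 : W) 1 + (u + 1) • single (z ^ 5 * s) 1 := by
    have e : t * (1 : W) = z ^ 5 * s := by
      rw [mul_one]; exact (ht2 cs hk (by norm_num)).symm
    have h := h1 1 1 (one_mul 1) (by rw [mul_one, one_mul]) (by rw [e, l1, lq5]; norm_num)
    rw [e] at h
    exact mk1 h
  have Gc : Top 1 (single (z ^ 3) 1) =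
      (u * u - u - 1) • single (z ^ 3) 1 + (u * u - u) • single (z ^ 2 * s) 1 := by
    have e : t * z ^ 3 = z ^ 2 * s := L4 cs hk (by norm_num)
    have e3 : z ^ 3 * t = z ^ 2 * s := by
      exact R3 cs 2
    have h := h2 1 (z ^ 3) (by rw [← pow_add]; exact hzk cs hk) (by rw [e, e3])
      (by rw [e, lq2, lz3]; norm_num)
    rw [e] at h
    exact mk2 h
  have Gq5 : Top 1 (single (z ^ 5 * s) 1) =
      (u * u - u - 1) • single (z ^ 5 * s) 1 + (u * u - u) • single (1 : W) 1 := by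
    have e : t * (z ^ 5 * s) = 1 := by
      have := L3 cs hk (show 5 + 0 + 1 = 6 by norm_num); rw [pow_zero] at this; exact this
    have e3 : (z ^ 5 * s) * t = 1 := by
      rw [R2 cs 5]; exact hzk cs hk
    have h := h2 1 (z ^ 5 * s) (pI cs 5) (by rw [e, e3]) (by rw [e, l1, lq5]; norm_num)
    rw [e] at h
    exact mk2 h
  have Gq2 : Top 1 (single (z ^ 2 * s) 1) =
      u • single (z ^ 2 * s) 1 + (u + 1) • single (z ^ 3) 1 := by
    have e : t * (z ^ 2 * s) = z ^ 3 := L3 cs hk (by norm_num)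
    have e3 : (z ^ 2 * s) * t = z ^ 3 := R2 cs 2
    have h := h1 1 (z ^ 2 * s) (pI cs 2) (by rw [e, e3]) (by rw [e, lq2, lz3]; norm_num)
    rw [e] at h
    exact mk1 h
  have Gq0 : Top 1 (single (z ^ 0 * s) 1) = single (z ^ 4 * s) 1 := by
    have e : t * (z ^ 0 * s) = z ^ 5 := L3 cs hk (by norm_num)
    have e2 : t * (z ^ 0 * s) * t = z ^ 4 * s := by
      rw [e]; exact R3 cs 4
    have e3 : (z ^ 0 * s) * t = z ^ 1 := by
      exact R2 cs 0
    have hne : t * (z ^ 0 * s) ≠ (z ^ 0 * s) * t := by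
      rw [e, e3]; exact zne cs hk (by norm_num) (by norm_num) (by norm_num)
    have h := h3 1 (z ^ 0 * s) (pI cs 0) hne (by rw [e, lz5, lq0]; norm_num)
    rw [e2] at h
    exact mk3 h
  have Gq1 : Top 1 (single (z ^ 1 * s) 1) = single (z ^ 3 * s) 1 := by
    have e : t * (z ^ 1 * s) = z ^ 4 := L3 cs hk (by norm_num)
    have e2 : t * (z ^ 1 * s) * t = z ^ 3 * s := by
      rw [e]; exact R3 cs 3
    have e3 : (z ^ 1 * s) * t = z ^ 2 := by
      exact R2 cs 1
    have hne : t * (z ^ 1 * s) ≠ (z ^ 1 * s) * t := by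
      rw [e, e3]; exact zne cs hk (by norm_num) (by norm_num) (by norm_num)
    have h := h3 1 (z ^ 1 * s) (pI cs 1) hne (by rw [e, lz4, lq1]; norm_num)
    rw [e2] at h
    exact mk3 h
  have Gq3 : Top 1 (single (z ^ 3 * s) 1) =
      (u * u - 1) • single (z ^ 3 * s) 1 + (u * u) • single (z ^ 1 * s) 1 := by
    have e : t * (z ^ 3 * s) = z ^ 2 := L3 cs hk (by norm_num)
    have e2 : t * (z ^ 3 * s) * t = z ^ 1 * s := by
      rw [e]; exact R3 cs 1
    have e3 : (z ^ 3 * s) * t = z ^ 4 := by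
      exact R2 cs 3
    have hne : t * (z ^ 3 * s) ≠ (z ^ 3 * s) * t := by
      rw [e, e3]; exact zne cs hk (by norm_num) (by norm_num) (by norm_num)
    have h := h4 1 (z ^ 3 * s) (pI cs 3) hne (by rw [e, lz2, lq3]; norm_num)
    rw [e2] at h
    exact mk4 h
  have Gq4 : Top 1 (single (z ^ 4 * s) 1) =
      (u * u - 1) • single (z ^ 4 * s) 1 + (u * u) • single (z ^ 0 * s) 1 := by
    have e : t * (z ^ 4 * s) = z ^ 1 := L3 cs hk (by norm_num)
    have e2 : t * (z ^ 4 * s) * t = z ^ 0 * s := by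
      rw [e]; exact R3 cs 0
    have e3 : (z ^ 4 * s) * t = z ^ 5 := by
      exact R2 cs 4
    have hne : t * (z ^ 4 * s) ≠ (z ^ 4 * s) * t := by
      rw [e, e3]; exact zne cs hk (by norm_num) (by norm_num) (by norm_num)
    have h := h4 1 (z ^ 4 * s) (pI cs 4) hne (by rw [e, lz1, lq4]; norm_num)
    rw [e2] at h
    exact mk4 h
  obtain ⟨A1, A2, A3, A4, A5, A6, A7, A8⟩ :=
    alg6 (T 1 : LaurentPolynomial ℤ) (Top 0) (Top 1) (single (1 : W) 1) (single (z ^ 3) 1)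
      (single (z ^ 0 * s) 1) (single (z ^ 1 * s) 1) (single (z ^ 2 * s) 1) (single (z ^ 3 * s) 1)
      (single (z ^ 4 * s) 1) (single (z ^ 5 * s) 1)
      Fb Fc Fq0 Fq1 Fq2 Fq3 Fq4 Fq5 Gb Gc Gq0 Gq1 Gq2 Gq3 Gq4 Gq5
  obtain ⟨j, hj, rfl | rfl⟩ := classify cs hk (by norm_num) w
  · have h2j : (cs.simple 0 * cs.simple 1) ^ (2 * j) = 1 := by
      rw [two_mul, pow_add]; exact hw
    have hdvd : 6 ∣ 2 * j := by rw [← hk]; exact orderOf_dvd_of_pow_eq_one h2j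
    interval_cases j
    · simpa [pow_zero] using A1
    · omega
    · omega
    · exact A2
    · omega
    · omega
  · interval_cases j
    · exact A3
    · exact A4
    · exact A5
    · exact A6
    · exact A7
    · exact A8

set_option maxHeartbeats 1000000 in
theorem master2 (hk : orderOf (cs.simple 0 * cs.simple 1) = 2) (w : W) (hw : w * w = 1) :
    Top 0 (Top 1 (single w 1)) = Top 1 (Top 0 (single w 1)) := by
  obtain ⟨f, hf⟩ := exists_hom cs 2 hk
  have hLip : ∀ (d : DihedralGroup 2) (i : Fin 2),
      NN 2 (sr (i.val : ZMod 2) * d) ≤ NN 2 d + 1 := by decide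
  have lz1 : ℓ (z ^ 1) = 2 := by
    have := length_eq cs f hf hLip (z ^ 1) (ll 1) (z_eq_ll cs 1)
      (by simp only [map_pow, map_mul, hf]; decide)
    simpa using this
  have lq0 : ℓ (z ^ 0 * s) = 1 := by
    have := length_eq cs f hf hLip (z ^ 0 * s) (ll 0 ++ [0]) (zs_eq_word cs 0)
      (by simp only [map_pow, map_mul, hf]; decide)
    simpa using this
  have lq1 : ℓ (z ^ 1 * s) = 1 := by
    have := length_eq cs f hf hLip (z ^ 1 * s) (lt' 0 ++ [1]) (zs_eq_word' cs hk (by norm_num))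
      (by simp only [map_pow, map_mul, hf]; decide)
    simpa using this
  have l1 : ℓ (1 : W) = 0 := cs.length_one
  have Fb : Top 0 (single (1 : W) 1) = u • single (1 : W) 1 + (u + 1) • single (z ^ 0 * s) 1 := by
    have e : s * (1 : W) = z ^ 0 * s := by rw [mul_one, pow_zero, one_mul]
    have h := h1 0 1 (one_mul 1) (by rw [mul_one, one_mul]) (by rw [e, l1, lq0]; norm_num)
    rw [e] at h
    exact mk1 h
  have Fc : Top 0 (single (z ^ 1) 1) =
      (u * u - u - 1) • single (z ^ 1) 1 + (u * u - u) • single (z ^ 1 * s) 1 := by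
    have e : s * z ^ 1 = z ^ 1 * s := L2 cs hk (by norm_num)
    have h := h2 0 (z ^ 1) (by rw [← pow_add]; exact hzk cs hk) e
      (by rw [e, lq1, lz1]; norm_num)
    rw [e] at h
    exact mk2 h
  have Fq0 : Top 0 (single (z ^ 0 * s) 1) =
      (u * u - u - 1) • single (z ^ 0 * s) 1 + (u * u - u) • single (1 : W) 1 := by
    have e : s * (z ^ 0 * s) = 1 := by rw [Linv, pow_zero, inv_one]
    have h := h2 0 (z ^ 0 * s) (pI cs 0) (by rw [e, R1, pow_zero]) (by rw [e, l1, lq0]; norm_num)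
    rw [e] at h
    exact mk2 h
  have Fq1 : Top 0 (single (z ^ 1 * s) 1) =
      u • single (z ^ 1 * s) 1 + (u + 1) • single (z ^ 1) 1 := by
    have e : s * (z ^ 1 * s) = z ^ 1 := L1 cs hk (by norm_num)
    have h := h1 0 (z ^ 1 * s) (pI cs 1) (by rw [e, R1]) (by rw [e, lq1, lz1]; norm_num)
    rw [e] at h
    exact mk1 h
  have Gb : Top 1 (single (1 : W) 1) = u • single (1 : W) 1 + (u + 1) • single (z ^ 1 * s) 1 := by
    have e : t * (1 : W) = z ^ 1 * s := by
      rw [mul_one]; exact (ht2 cs hk (by norm_num)).symm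
    have h := h1 1 1 (one_mul 1) (by rw [mul_one, one_mul]) (by rw [e, l1, lq1]; norm_num)
    rw [e] at h
    exact mk1 h
  have Gc : Top 1 (single (z ^ 1) 1) =
      (u * u - u - 1) • single (z ^ 1) 1 + (u * u - u) • single (z ^ 0 * s) 1 := by
    have e : t * z ^ 1 = z ^ 0 * s := L4 cs hk (by norm_num)
    have e3 : z ^ 1 * t = z ^ 0 * s := R3 cs 0
    have h := h2 1 (z ^ 1) (by rw [← pow_add]; exact hzk cs hk) (by rw [e, e3])
      (by rw [e, lq0, lz1]; norm_num)
    rw [e] at h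
    exact mk2 h
  have Gq1 : Top 1 (single (z ^ 1 * s) 1) =
      (u * u - u - 1) • single (z ^ 1 * s) 1 + (u * u - u) • single (1 : W) 1 := by
    have e : t * (z ^ 1 * s) = 1 := by
      have := L3 cs hk (show 1 + 0 + 1 = 2 by norm_num); rw [pow_zero] at this; exact this
    have e3 : (z ^ 1 * s) * t = 1 := by
      rw [R2 cs 1]; exact hzk cs hk
    have h := h2 1 (z ^ 1 * s) (pI cs 1) (by rw [e, e3]) (by rw [e, l1, lq1]; norm_num)
    rw [e] at h
    exact mk2 h
  have Gq0 : Top 1 (single (z ^ 0 * s) 1) =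
      u • single (z ^ 0 * s) 1 + (u + 1) • single (z ^ 1) 1 := by
    have e : t * (z ^ 0 * s) = z ^ 1 := L3 cs hk (by norm_num)
    have e3 : (z ^ 0 * s) * t = z ^ 1 := R2 cs 0
    have h := h1 1 (z ^ 0 * s) (pI cs 0) (by rw [e, e3]) (by rw [e, lq0, lz1]; norm_num)
    rw [e] at h
    exact mk1 h
  obtain ⟨A1, A2, A3, A4⟩ :=
    alg2 (T 1 : LaurentPolynomial ℤ) (Top 0) (Top 1) (single (1 : W) 1) (single (z ^ 1) 1)
      (single (z ^ 0 * s) 1) (single (z ^ 1 * s) 1)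
      Fb Fc Fq0 Fq1 Gb Gc Gq1 Gq0
  obtain ⟨j, hj, rfl | rfl⟩ := classify cs hk (by norm_num) w
  · interval_cases j
    · simpa [pow_zero] using A1
    · exact A2
  · interval_cases j
    · exact A3
    · exact A4

set_option maxHeartbeats 1000000 in
theorem master3 (hk : orderOf (cs.simple 0 * cs.simple 1) = 3) (w : W) (hw : w * w = 1) :
    Top 0 (Top 1 (Top 0 (single w 1))) = Top 1 (Top 0 (Top 1 (single w 1))) := by
  obtain ⟨f, hf⟩ := exists_hom cs 3 hk
  have hLip : ∀ (d : DihedralGroup 3) (i : Fin 2),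
      NN 3 (sr (i.val : ZMod 3) * d) ≤ NN 3 d + 1 := by decide
  have lz1 : ℓ (z ^ 1) = 2 := by
    have := length_eq cs f hf hLip (z ^ 1) (ll 1) (z_eq_ll cs 1)
      (by simp only [map_pow, map_mul, hf]; decide)
    simpa using this
  have lz2 : ℓ (z ^ 2) = 2 := by
    have := length_eq cs f hf hLip (z ^ 2) (lt' 1) (zrot_eq_word cs hk (by norm_num))
      (by simp only [map_pow, map_mul, hf]; decide)
    simpa using this
  have lq0 : ℓ (z ^ 0 * s) = 1 := by
    have := length_eq cs f hf hLip (z ^ 0 * s) (ll 0 ++ [0]) (zs_eq_word cs 0)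
      (by simp only [map_pow, map_mul, hf]; decide)
    simpa using this
  have lq1 : ℓ (z ^ 1 * s) = 3 := by
    have := length_eq cs f hf hLip (z ^ 1 * s) (ll 1 ++ [0]) (zs_eq_word cs 1)
      (by simp only [map_pow, map_mul, hf]; decide)
    simpa using this
  have lq2 : ℓ (z ^ 2 * s) = 1 := by
    have := length_eq cs f hf hLip (z ^ 2 * s) (lt' 0 ++ [1]) (zs_eq_word' cs hk (by norm_num))
      (by simp only [map_pow, map_mul, hf]; decide)
    simpa using this
  have l1 : ℓ (1 : W) = 0 := cs.length_one
  have Fb : Top 0 (single (1 : W) 1) = u • single (1 : W) 1 + (u + 1) • single (z ^ 0 * s) 1 := by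
    have e : s * (1 : W) = z ^ 0 * s := by rw [mul_one, pow_zero, one_mul]
    have h := h1 0 1 (one_mul 1) (by rw [mul_one, one_mul]) (by rw [e, l1, lq0]; norm_num)
    rw [e] at h
    exact mk1 h
  have Fq0 : Top 0 (single (z ^ 0 * s) 1) =
      (u * u - u - 1) • single (z ^ 0 * s) 1 + (u * u - u) • single (1 : W) 1 := by
    have e : s * (z ^ 0 * s) = 1 := by rw [Linv, pow_zero, inv_one]
    have h := h2 0 (z ^ 0 * s) (pI cs 0) (by rw [e, R1, pow_zero]) (by rw [e, l1, lq0]; norm_num)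
    rw [e] at h
    exact mk2 h
  have Fq1 : Top 0 (single (z ^ 1 * s) 1) =
      (u * u - 1) • single (z ^ 1 * s) 1 + (u * u) • single (z ^ 2 * s) 1 := by
    have e : s * (z ^ 1 * s) = z ^ 2 := L1 cs hk (by norm_num)
    have e2 : s * (z ^ 1 * s) * s = z ^ 2 * s := by rw [e]
    have hne : s * (z ^ 1 * s) ≠ (z ^ 1 * s) * s := by
      rw [e, R1]; exact zne cs hk (by norm_num) (by norm_num) (by norm_num)
    have h := h4 0 (z ^ 1 * s) (pI cs 1) hne (by rw [e, lz2, lq1]; norm_num)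
    rw [e2] at h
    exact mk4 h
  have Fq2 : Top 0 (single (z ^ 2 * s) 1) = single (z ^ 1 * s) 1 := by
    have e : s * (z ^ 2 * s) = z ^ 1 := L1 cs hk (by norm_num)
    have e2 : s * (z ^ 2 * s) * s = z ^ 1 * s := by rw [e]
    have hne : s * (z ^ 2 * s) ≠ (z ^ 2 * s) * s := by
      rw [e, R1]; exact zne cs hk (by norm_num) (by norm_num) (by norm_num)
    have h := h3 0 (z ^ 2 * s) (pI cs 2) hne (by rw [e, lz1, lq2]; norm_num)
    rw [e2] at h
    exact mk3 h
  have Gb : Top 1 (single (1 : W) 1) = u • single (1 : W) 1 + (u + 1) • single (z ^ 2 * s) 1 := by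
    have e : t * (1 : W) = z ^ 2 * s := by
      rw [mul_one]; exact (ht2 cs hk (by norm_num)).symm
    have h := h1 1 1 (one_mul 1) (by rw [mul_one, one_mul]) (by rw [e, l1, lq2]; norm_num)
    rw [e] at h
    exact mk1 h
  have Gq2 : Top 1 (single (z ^ 2 * s) 1) =
      (u * u - u - 1) • single (z ^ 2 * s) 1 + (u * u - u) • single (1 : W) 1 := by
    have e : t * (z ^ 2 * s) = 1 := by
      have := L3 cs hk (show 2 + 0 + 1 = 3 by norm_num); rw [pow_zero] at this; exact this
    have e3 : (z ^ 2 * s) * t = 1 := by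
      rw [R2 cs 2]; exact hzk cs hk
    have h := h2 1 (z ^ 2 * s) (pI cs 2) (by rw [e, e3]) (by rw [e, l1, lq2]; norm_num)
    rw [e] at h
    exact mk2 h
  have Gq0 : Top 1 (single (z ^ 0 * s) 1) = single (z ^ 1 * s) 1 := by
    have e : t * (z ^ 0 * s) = z ^ 2 := L3 cs hk (by norm_num)
    have e2 : t * (z ^ 0 * s) * t = z ^ 1 * s := by
      rw [e]; exact R3 cs 1
    have e3 : (z ^ 0 * s) * t = z ^ 1 := R2 cs 0
    have hne : t * (z ^ 0 * s) ≠ (z ^ 0 * s) * t := by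
      rw [e, e3]; exact zne cs hk (by norm_num) (by norm_num) (by norm_num)
    have h := h3 1 (z ^ 0 * s) (pI cs 0) hne (by rw [e, lz2, lq0]; norm_num)
    rw [e2] at h
    exact mk3 h
  have Gq1 : Top 1 (single (z ^ 1 * s) 1) =
      (u * u - 1) • single (z ^ 1 * s) 1 + (u * u) • single (z ^ 0 * s) 1 := by
    have e : t * (z ^ 1 * s) = z ^ 1 := L3 cs hk (by norm_num)
    have e2 : t * (z ^ 1 * s) * t = z ^ 0 * s := by
      rw [e]; exact R3 cs 0
    have e3 : (z ^ 1 * s) * t = z ^ 2 := R2 cs 1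
    have hne : t * (z ^ 1 * s) ≠ (z ^ 1 * s) * t := by
      rw [e, e3]; exact zne cs hk (by norm_num) (by norm_num) (by norm_num)
    have h := h4 1 (z ^ 1 * s) (pI cs 1) hne (by rw [e, lz1, lq1]; norm_num)
    rw [e2] at h
    exact mk4 h
  obtain ⟨A1, A2, A3, A4⟩ :=
    alg3 (T 1 : LaurentPolynomial ℤ) (Top 0) (Top 1) (single (1 : W) 1)
      (single (z ^ 0 * s) 1) (single (z ^ 1 * s) 1) (single (z ^ 2 * s) 1)
      Fb Fq0 Fq1 Fq2 Gb Gq2 Gq0 Gq1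
  obtain ⟨j, hj, rfl | rfl⟩ := classify cs hk (by norm_num) w
  · have h2j : (cs.simple 0 * cs.simple 1) ^ (2 * j) = 1 := by
      rw [two_mul, pow_add]; exact hw
    have hdvd : 3 ∣ 2 * j := by rw [← hk]; exact orderOf_dvd_of_pow_eq_one h2j
    interval_cases j
    · simpa [pow_zero] using A1
    · omega
    · omega
  · interval_cases j
    · exact A2
    · exact A3
    · exact A4

set_option maxHeartbeats 1000000 in
theorem master4 (hk : orderOf (cs.simple 0 * cs.simple 1) = 4) (w : W) (hw : w * w = 1) :
    Top 0 (Top 1 (Top 0 (Top 1 (single w 1)))) = Top 1 (Top 0 (Top 1 (Top 0 (single w 1)))) := by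
  obtain ⟨f, hf⟩ := exists_hom cs 4 hk
  have hLip : ∀ (d : DihedralGroup 4) (i : Fin 2),
      NN 4 (sr (i.val : ZMod 4) * d) ≤ NN 4 d + 1 := by decide
  have lz1 : ℓ (z ^ 1) = 2 := by
    have := length_eq cs f hf hLip (z ^ 1) (ll 1) (z_eq_ll cs 1)
      (by simp only [map_pow, map_mul, hf]; decide)
    simpa using this
  have lz2 : ℓ (z ^ 2) = 4 := by
    have := length_eq cs f hf hLip (z ^ 2) (ll 2) (z_eq_ll cs 2)
      (by simp only [map_pow, map_mul, hf]; decide)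
    simpa using this
  have lz3 : ℓ (z ^ 3) = 2 := by
    have := length_eq cs f hf hLip (z ^ 3) (lt' 1) (zrot_eq_word cs hk (by norm_num))
      (by simp only [map_pow, map_mul, hf]; decide)
    simpa using this
  have lq0 : ℓ (z ^ 0 * s) = 1 := by
    have := length_eq cs f hf hLip (z ^ 0 * s) (ll 0 ++ [0]) (zs_eq_word cs 0)
      (by simp only [map_pow, map_mul, hf]; decide)
    simpa using this
  have lq1 : ℓ (z ^ 1 * s) = 3 := by
    have := length_eq cs f hf hLip (z ^ 1 * s) (ll 1 ++ [0]) (zs_eq_word cs 1)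
      (by simp only [map_pow, map_mul, hf]; decide)
    simpa using this
  have lq2 : ℓ (z ^ 2 * s) = 3 := by
    have := length_eq cs f hf hLip (z ^ 2 * s) (lt' 1 ++ [1]) (zs_eq_word' cs hk (by norm_num))
      (by simp only [map_pow, map_mul, hf]; decide)
    simpa using this
  have lq3 : ℓ (z ^ 3 * s) = 1 := by
    have := length_eq cs f hf hLip (z ^ 3 * s) (lt' 0 ++ [1]) (zs_eq_word' cs hk (by norm_num))
      (by simp only [map_pow, map_mul, hf]; decide)
    simpa using this
  have l1 : ℓ (1 : W) = 0 := cs.length_one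
  have Fb : Top 0 (single (1 : W) 1) = u • single (1 : W) 1 + (u + 1) • single (z ^ 0 * s) 1 := by
    have e : s * (1 : W) = z ^ 0 * s := by rw [mul_one, pow_zero, one_mul]
    have h := h1 0 1 (one_mul 1) (by rw [mul_one, one_mul]) (by rw [e, l1, lq0]; norm_num)
    rw [e] at h
    exact mk1 h
  have Fc : Top 0 (single (z ^ 2) 1) =
      (u * u - u - 1) • single (z ^ 2) 1 + (u * u - u) • single (z ^ 2 * s) 1 := by
    have e : s * z ^ 2 = z ^ 2 * s := L2 cs hk (by norm_num)
    have h := h2 0 (z ^ 2) (by rw [← pow_add]; exact hzk cs hk) e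
      (by rw [e, lq2, lz2]; norm_num)
    rw [e] at h
    exact mk2 h
  have Fq0 : Top 0 (single (z ^ 0 * s) 1) =
      (u * u - u - 1) • single (z ^ 0 * s) 1 + (u * u - u) • single (1 : W) 1 := by
    have e : s * (z ^ 0 * s) = 1 := by rw [Linv, pow_zero, inv_one]
    have h := h2 0 (z ^ 0 * s) (pI cs 0) (by rw [e, R1, pow_zero]) (by rw [e, l1, lq0]; norm_num)
    rw [e] at h
    exact mk2 h
  have Fq2 : Top 0 (single (z ^ 2 * s) 1) =
      u • single (z ^ 2 * s) 1 + (u + 1) • single (z ^ 2) 1 := by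
    have e : s * (z ^ 2 * s) = z ^ 2 := L1 cs hk (by norm_num)
    have h := h1 0 (z ^ 2 * s) (pI cs 2) (by rw [e, R1]) (by rw [e, lq2, lz2]; norm_num)
    rw [e] at h
    exact mk1 h
  have Fq1 : Top 0 (single (z ^ 1 * s) 1) =
      (u * u - 1) • single (z ^ 1 * s) 1 + (u * u) • single (z ^ 3 * s) 1 := by
    have e : s * (z ^ 1 * s) = z ^ 3 := L1 cs hk (by norm_num)
    have e2 : s * (z ^ 1 * s) * s = z ^ 3 * s := by rw [e]
    have hne : s * (z ^ 1 * s) ≠ (z ^ 1 * s) * s := by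
      rw [e, R1]; exact zne cs hk (by norm_num) (by norm_num) (by norm_num)
    have h := h4 0 (z ^ 1 * s) (pI cs 1) hne (by rw [e, lz3, lq1]; norm_num)
    rw [e2] at h
    exact mk4 h
  have Fq3 : Top 0 (single (z ^ 3 * s) 1) = single (z ^ 1 * s) 1 := by
    have e : s * (z ^ 3 * s) = z ^ 1 := L1 cs hk (by norm_num)
    have e2 : s * (z ^ 3 * s) * s = z ^ 1 * s := by rw [e]
    have hne : s * (z ^ 3 * s) ≠ (z ^ 3 * s) * s := by
      rw [e, R1]; exact zne cs hk (by norm_num) (by norm_num) (by norm_num)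
    have h := h3 0 (z ^ 3 * s) (pI cs 3) hne (by rw [e, lz1, lq3]; norm_num)
    rw [e2] at h
    exact mk3 h
  have Gb : Top 1 (single (1 : W) 1) = u • single (1 : W) 1 + (u + 1) • single (z ^ 3 * s) 1 := by
    have e : t * (1 : W) = z ^ 3 * s := by
      rw [mul_one]; exact (ht2 cs hk (by norm_num)).symm
    have h := h1 1 1 (one_mul 1) (by rw [mul_one, one_mul]) (by rw [e, l1, lq3]; norm_num)
    rw [e] at h
    exact mk1 h
  have Gc : Top 1 (single (z ^ 2) 1) =
      (u * u - u - 1) • single (z ^ 2) 1 + (u * u - u) • single (z ^ 1 * s) 1 := by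
    have e : t * z ^ 2 = z ^ 1 * s := L4 cs hk (by norm_num)
    have e3 : z ^ 2 * t = z ^ 1 * s := R3 cs 1
    have h := h2 1 (z ^ 2) (by rw [← pow_add]; exact hzk cs hk) (by rw [e, e3])
      (by rw [e, lq1, lz2]; norm_num)
    rw [e] at h
    exact mk2 h
  have Gq3 : Top 1 (single (z ^ 3 * s) 1) =
      (u * u - u - 1) • single (z ^ 3 * s) 1 + (u * u - u) • single (1 : W) 1 := by
    have e : t * (z ^ 3 * s) = 1 := by
      have := L3 cs hk (show 3 + 0 + 1 = 4 by norm_num); rw [pow_zero] at this; exact this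
    have e3 : (z ^ 3 * s) * t = 1 := by
      rw [R2 cs 3]; exact hzk cs hk
    have h := h2 1 (z ^ 3 * s) (pI cs 3) (by rw [e, e3]) (by rw [e, l1, lq3]; norm_num)
    rw [e] at h
    exact mk2 h
  have Gq1 : Top 1 (single (z ^ 1 * s) 1) =
      u • single (z ^ 1 * s) 1 + (u + 1) • single (z ^ 2) 1 := by
    have e : t * (z ^ 1 * s) = z ^ 2 := L3 cs hk (by norm_num)
    have e3 : (z ^ 1 * s) * t = z ^ 2 := R2 cs 1
    have h := h1 1 (z ^ 1 * s) (pI cs 1) (by rw [e, e3]) (by rw [e, lq1, lz2]; norm_num)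
    rw [e] at h
    exact mk1 h
  have Gq0 : Top 1 (single (z ^ 0 * s) 1) = single (z ^ 2 * s) 1 := by
    have e : t * (z ^ 0 * s) = z ^ 3 := L3 cs hk (by norm_num)
    have e2 : t * (z ^ 0 * s) * t = z ^ 2 * s := by
      rw [e]; exact R3 cs 2
    have e3 : (z ^ 0 * s) * t = z ^ 1 := R2 cs 0
    have hne : t * (z ^ 0 * s) ≠ (z ^ 0 * s) * t := by
      rw [e, e3]; exact zne cs hk (by norm_num) (by norm_num) (by norm_num)
    have h := h3 1 (z ^ 0 * s) (pI cs 0) hne (by rw [e, lz3, lq0]; norm_num)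
    rw [e2] at h
    exact mk3 h
  have Gq2 : Top 1 (single (z ^ 2 * s) 1) =
      (u * u - 1) • single (z ^ 2 * s) 1 + (u * u) • single (z ^ 0 * s) 1 := by
    have e : t * (z ^ 2 * s) = z ^ 1 := L3 cs hk (by norm_num)
    have e2 : t * (z ^ 2 * s) * t = z ^ 0 * s := by
      rw [e]; exact R3 cs 0
    have e3 : (z ^ 2 * s) * t = z ^ 3 := R2 cs 2
    have hne : t * (z ^ 2 * s) ≠ (z ^ 2 * s) * t := by
      rw [e, e3]; exact zne cs hk (by norm_num) (by norm_num) (by norm_num)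
    have h := h4 1 (z ^ 2 * s) (pI cs 2) hne (by rw [e, lz1, lq2]; norm_num)
    rw [e2] at h
    exact mk4 h
  obtain ⟨A1, A2, A3, A4, A5, A6⟩ :=
    alg4 (T 1 : LaurentPolynomial ℤ) (Top 0) (Top 1) (single (1 : W) 1) (single (z ^ 2) 1)
      (single (z ^ 0 * s) 1) (single (z ^ 1 * s) 1) (single (z ^ 2 * s) 1) (single (z ^ 3 * s) 1)
      Fb Fc Fq0 Fq1 Fq2 Fq3 Gb Gc Gq0 Gq1 Gq2 Gq3
  obtain ⟨j, hj, rfl | rfl⟩ := classify cs hk (by norm_num) w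
  · have h2j : (cs.simple 0 * cs.simple 1) ^ (2 * j) = 1 := by
      rw [two_mul, pow_add]; exact hw
    have hdvd : 4 ∣ 2 * j := by rw [← hk]; exact orderOf_dvd_of_pow_eq_one h2j
    interval_cases j
    · simpa [pow_zero] using A1
    · omega
    · exact A2
    · omega
  · interval_cases j
    · exact A3
    · exact A4
    · exact A5
    · exact A6

end HBM

open Finsupp LaurentPolynomial

/-- braid relation for the operators `T_s, T_t` on the free `ℤ[u,u⁻¹]`-module with
basis the involutions of a dihedral Weyl group `W` of rank 2 (so the order `k` of `st` is
2, 3, 4 or 6): the alternating products `T_s T_t T_s ⋯ = T_t T_s T_t ⋯` (`k` factors each)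
agree on `M` (the span of the basis vectors `a_w`, `w` an involution). -/
theorem hecke_module_braid_relation {W : Type*} [Group W] {M : CoxeterMatrix (Fin 2)}
    (cs : CoxeterSystem M W)
    (Top : Fin 2 → Module.End (LaurentPolynomial ℤ) (W →₀ LaurentPolynomial ℤ))
    (k : ℕ) (hk : orderOf (cs.simple 0 * cs.simple 1) = k)
    (hWeyl : k = 2 ∨ k = 3 ∨ k = 4 ∨ k = 6)
    (h1 : ∀ (i : Fin 2) (w : W), w * w = 1 →
      cs.simple i * w = w * cs.simple i →
      cs.length w < cs.length (cs.simple i * w) →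
      Top i (single w 1) + single w 1 =
        (T 1 + 1 : LaurentPolynomial ℤ) • (single w 1 + single (cs.simple i * w) 1))
    (h2 : ∀ (i : Fin 2) (w : W), w * w = 1 →
      cs.simple i * w = w * cs.simple i →
      cs.length (cs.simple i * w) < cs.length w →
      Top i (single w 1) + single w 1 =
        (T 2 - T 1 : LaurentPolynomial ℤ) • (single w 1 + single (cs.simple i * w) 1))
    (h3 : ∀ (i : Fin 2) (w : W), w * w = 1 →
      cs.simple i * w ≠ w * cs.simple i →
      cs.length w < cs.length (cs.simple i * w) →
      Top i (single w 1) + single w 1 =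
        single w 1 + single (cs.simple i * w * cs.simple i) 1)
    (h4 : ∀ (i : Fin 2) (w : W), w * w = 1 →
      cs.simple i * w ≠ w * cs.simple i →
      cs.length (cs.simple i * w) < cs.length w →
      Top i (single w 1) + single w 1 =
        (T 2 : LaurentPolynomial ℤ) • (single w 1 + single (cs.simple i * w * cs.simple i) 1)) :
    ∀ m : W →₀ LaurentPolynomial ℤ,
      m ∈ Submodule.span (LaurentPolynomial ℤ)
        (Set.range (fun w : {w : W // w * w = 1} => single (w : W) (1 : LaurentPolynomial ℤ))) →
      ((List.range k).map (fun n => if n % 2 = 0 then Top 0 else Top 1)).prod m =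
        ((List.range k).map (fun n => if n % 2 = 0 then Top 1 else Top 0)).prod m := by
  intro m hm
  induction hm using Submodule.span_induction with
  | zero => simp
  | add x y hx hy ihx ihy => rw [map_add, map_add, ihx, ihy]
  | smul a x hx ih => rw [map_smul, map_smul, ih]
  | mem x hx =>
      obtain ⟨⟨w, hw⟩, rfl⟩ := hx
      rcases hWeyl with rfl | rfl | rfl | rfl
      · have hR : List.range 2 = [0, 1] := rfl
        rw [hR]
        simp only [List.map_cons, List.map_nil, List.prod_cons, List.prod_nil, mul_one,
          Module.End.mul_apply]
        norm_num
        exact HBM.master2 cs Top h1 h2 h3 h4 hk w hw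
      · have hR : List.range 3 = [0, 1, 2] := rfl
        rw [hR]
        simp only [List.map_cons, List.map_nil, List.prod_cons, List.prod_nil, mul_one,
          Module.End.mul_apply]
        norm_num
        exact HBM.master3 cs Top h1 h2 h3 h4 hk w hw
      · have hR : List.range 4 = [0, 1, 2, 3] := rfl
        rw [hR]
        simp only [List.map_cons, List.map_nil, List.prod_cons, List.prod_nil, mul_one,
          Module.End.mul_apply]
        norm_num
        exact HBM.master4 cs Top h1 h2 h3 h4 hk w hw
      · have hR : List.range 6 = [0, 1, 2, 3, 4, 5] := rfl
        rw [hR]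
        simp only [List.map_cons, List.map_nil, List.prod_cons, List.prod_nil, mul_one,
          Module.End.mul_apply]
        norm_num
        exact HBM.master6 cs Top h1 h2 h3 h4 hk w hw
end

section
/- Let W be a Coxeter group, I its set of involutions, and M₁ the ℚ[W]-module with basis (a_w)_{w∈I} where s·a_w = a_w + 2a_{sw} if sw = ws > w; s·a_w = -a_w if sw = ws < w; s·a_w = a_{sws} if sw ≠ ws. Extending scalars to any field, M₁ is generated as a W-module by the single element a₁ (the basis vector at the identity involution), provided 2 is invertible. -/
open Finsupp List

namespace M1Aux

variable {B : Type*} {W : Type*} [Group W] [DecidableEq W] {M : CoxeterMatrix B}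
  (cs : CoxeterSystem M W)

local prefix:100 "s" => cs.simple
local prefix:100 "π" => cs.wordProd
local prefix:100 "ℓ" => cs.length
local prefix:100 "ris" => cs.rightInvSeq

/-- The sign-flipping action of a simple generator on `W × ℤˣ`. -/
def F (i : B) : Function.End (W × ℤˣ) :=
  fun p => (cs.simple i * p.1 * cs.simple i, if p.1 = cs.simple i then -p.2 else p.2)

/-- Composite of the `F`'s along a word. -/
def phi (ω : List B) : Function.End (W × ℤˣ) := (ω.map (F cs)).prod

theorem phi_nil : phi cs ([] : List B) = 1 := by simp [phi]

theorem phi_cons (i : B) (ω : List B) : phi cs (i :: ω) = F cs i * phi cs ω := by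
  simp [phi]

theorem phi_apply (ω : List B) (t : W) (ε : ℤˣ) :
    phi cs ω (t, ε) = (π ω * t * (π ω)⁻¹,
      if Odd ((ris ω).count t) then -ε else ε) := by
  induction ω generalizing t ε with
  | nil =>
    simp only [phi_nil, CoxeterSystem.wordProd_nil, CoxeterSystem.rightInvSeq_nil,
      List.count_nil, one_mul, inv_one, mul_one]
    norm_num
    rfl
  | cons x ω ih =>
    have happ : phi cs (x :: ω) (t, ε) = F cs x (phi cs ω (t, ε)) := by
      rw [phi_cons]; rfl
    rw [happ, ih]
    show (s x * (π ω * t * (π ω)⁻¹) * s x,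
        if π ω * t * (π ω)⁻¹ = s x then -(if Odd ((ris ω).count t) then -ε else ε)
        else (if Odd ((ris ω).count t) then -ε else ε)) = _
    simp only [CoxeterSystem.wordProd_cons, CoxeterSystem.rightInvSeq]
    have hfst : s x * (π ω * t * (π ω)⁻¹) * s x = s x * π ω * t * (s x * π ω)⁻¹ := by
      rw [mul_inv_rev, cs.inv_simple]
      group
    by_cases h : π ω * t * (π ω)⁻¹ = s x
    · have ht : t = (π ω)⁻¹ * s x * π ω := by
        rw [← h]; group
      have hcount : ((π ω)⁻¹ * s x * π ω :: ris ω).count t = (ris ω).count t + 1 := by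
        simp [List.count_cons, ← ht]
      simp only [hcount, if_pos h]
      by_cases hodd : Odd ((ris ω).count t)
      · have h1 : ¬ Odd ((ris ω).count t + 1) := by simp [Nat.odd_add_one, hodd]
        rw [if_pos hodd, if_neg h1, hfst, neg_neg]
      · have h1 : Odd ((ris ω).count t + 1) := by simp [Nat.odd_add_one, hodd]
        rw [if_neg hodd, if_pos h1, hfst]
    · have ht : t ≠ (π ω)⁻¹ * s x * π ω := by
        intro hh
        apply h
        rw [hh]; group
      have hcount : ((π ω)⁻¹ * s x * π ω :: ris ω).count t = (ris ω).count t := by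
        simp [List.count_cons, ht, Ne.symm ht]
      simp only [hcount, if_neg h]
      rw [hfst]

theorem phi_alt (i i' : B) (m : ℕ) :
    phi cs (CoxeterSystem.alternatingWord i i' (2 * m)) = (F cs i * F cs i') ^ m := by
  induction m with
  | zero => simp [CoxeterSystem.alternatingWord, phi_nil]
  | succ m ih =>
    have h2 : 2 * (m + 1) = (2 * m + 1) + 1 := by ring
    rw [h2, CoxeterSystem.alternatingWord_succ', CoxeterSystem.alternatingWord_succ']
    have he1 : ¬ Even (2 * m + 1) := by simp [Nat.even_add_one]
    have he2 : Even (2 * m) := even_two_mul m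
    rw [if_neg he1, if_pos he2, phi_cons, phi_cons, ih, pow_succ']
    rw [mul_assoc]

/-- The common value of the two braid words. -/
def z (i i' : B) : W := π (CoxeterSystem.alternatingWord i i' (M i i'))

theorem z_symm (i i' : B) : z cs i' i = z cs i i' := by
  have := cs.wordProd_braidWord_eq i' i
  unfold CoxeterSystem.braidWord at this
  rw [M.symmetric i' i] at this
  unfold z
  rw [M.symmetric i' i]
  exact this

theorem simple_mul_z (i i' : B) :
    s (if Even (M i i') then i' else i) * z cs i i' = z cs i i' * s i' := by
  have h1 : s (if Even (M i i') then i' else i) * z cs i i' =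
      π (CoxeterSystem.alternatingWord i i' (M i i' + 1)) := by
    rw [CoxeterSystem.alternatingWord_succ', CoxeterSystem.wordProd_cons]
    rfl
  have h2 : π (CoxeterSystem.alternatingWord i i' (M i i' + 1)) =
      π (CoxeterSystem.alternatingWord i' i (M i i')) * s i' := by
    rw [CoxeterSystem.alternatingWord_succ, CoxeterSystem.wordProd_concat]
  rw [h1, h2]
  have : π (CoxeterSystem.alternatingWord i' i (M i i')) = z cs i i' := by
    rw [← M.symmetric i' i]
    exact z_symm cs i i'
  rw [this]

theorem Z (i i' : B) (K : ℕ) :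
    s (if Even (K + M i i') then i' else i) * z cs i i' =
      z cs i i' * s (if Even K then i' else i) := by
  rcases Nat.even_or_odd K with hK | hK
  · have : Even (K + M i i') ↔ Even (M i i') := by
      simp [Nat.even_add, hK]
    simp only [this, if_pos hK]
    exact simple_mul_z cs i i'
  · have hnK : ¬ Even K := by simpa [Nat.not_even_iff_odd] using hK
    have h1 : Even (K + M i i') ↔ ¬ Even (M i i') := by
      simp [Nat.even_add, hnK]
    have key := simple_mul_z cs i' i
    rw [M.symmetric i' i, z_symm cs i i'] at key
    have hletters : (if Even (K + M i i') then i' else i) =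
        (if Even (M i i') then i else i') := by
      rcases Nat.even_or_odd (M i i') with hm | hm
      · rw [if_pos hm, if_neg (by simp [h1, hm])]
      · rw [if_neg (Nat.not_even_iff_odd.2 hm), if_pos (h1.2 (Nat.not_even_iff_odd.2 hm))]
    rw [hletters, if_neg hnK]
    exact key

theorem P (i i' : B) (K : ℕ) :
    π (CoxeterSystem.alternatingWord i i' (K + M i i')) =
      z cs i i' * π (CoxeterSystem.alternatingWord i i' K) := by
  induction K with
  | zero =>
    simp [CoxeterSystem.alternatingWord, z]
  | succ K ih =>
    have h1 : K + 1 + M i i' = (K + M i i') + 1 := by ring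
    rw [h1, CoxeterSystem.alternatingWord_succ', CoxeterSystem.wordProd_cons, ih,
      CoxeterSystem.alternatingWord_succ', CoxeterSystem.wordProd_cons, ← mul_assoc,
      ← mul_assoc, Z cs i i' K]

/-- The reflection appearing in the inversion sequence of an alternating word. -/
def g (i i' : B) (K : ℕ) : W :=
  (π (CoxeterSystem.alternatingWord i i' K))⁻¹ * π (CoxeterSystem.alternatingWord i i' (K + 1))

theorem g_add (i i' : B) (K : ℕ) : g cs i i' (K + M i i') = g cs i i' K := by
  unfold g
  have h1 : K + M i i' + 1 = (K + 1) + M i i' := by ring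
  rw [h1, P cs i i' K, P cs i i' (K + 1), mul_inv_rev]
  group

theorem alt_drop (i i' : B) : ∀ (n k : ℕ),
    (CoxeterSystem.alternatingWord i i' n).drop k = CoxeterSystem.alternatingWord i i' (n - k)
  | n, 0 => by simp
  | 0, k+1 => by simp [CoxeterSystem.alternatingWord]
  | n+1, k+1 => by
    rw [CoxeterSystem.alternatingWord_succ', List.drop_succ_cons, alt_drop i i' n k]
    congr 1
    omega

theorem ris_getD (i i' : B) (n j : ℕ) (hj : j < n) :
    (ris (CoxeterSystem.alternatingWord i i' n)).getD j 1 = g cs i i' (n - 1 - j) := by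
  rw [cs.getD_rightInvSeq]
  have hd1 : (CoxeterSystem.alternatingWord i i' n).drop (j + 1) =
      CoxeterSystem.alternatingWord i i' (n - 1 - j) := by
    rw [alt_drop]
    congr 1
    omega
  have hd0 : (CoxeterSystem.alternatingWord i i' n).drop j =
      CoxeterSystem.alternatingWord i i' ((n - 1 - j) + 1) := by
    rw [alt_drop]
    congr 1
    omega
  have hget : (CoxeterSystem.alternatingWord i i' n)[j]? =
      some (if Even (n - 1 - j) then i' else i) := by
    have := List.getElem?_drop (xs := CoxeterSystem.alternatingWord i i' n) (i := j) (j := 0)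
    rw [Nat.add_zero] at this
    rw [← this, hd0, CoxeterSystem.alternatingWord_succ']
    rfl
  rw [hd1, hget]
  have hs : π (CoxeterSystem.alternatingWord i i' ((n - 1 - j) + 1)) =
      s (if Even (n - 1 - j) then i' else i) * π (CoxeterSystem.alternatingWord i i' (n - 1 - j)) := by
    rw [CoxeterSystem.alternatingWord_succ', CoxeterSystem.wordProd_cons]
  unfold g
  rw [hs]
  simp only [Option.map_some, Option.getD_some]
  group

theorem count_even (i i' : B) (t : W) :
    Even ((ris (CoxeterSystem.alternatingWord i i' (2 * M i i'))).count t) := by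
  set m := M i i' with hm
  set R := ris (CoxeterSystem.alternatingWord i i' (2 * m)) with hR
  have hlen : R.length = 2 * m := by
    rw [hR, CoxeterSystem.length_rightInvSeq, CoxeterSystem.length_alternatingWord]
  have hdt : R.drop m = R.take m := by
    apply List.ext_getElem
    · rw [List.length_drop, List.length_take, hlen]
      omega
    · intro j h1 h2
      have hjm : j < m := by
        rw [List.length_take, hlen] at h2
        omega
      rw [List.getElem_drop, List.getElem_take]
      have e1 : R[m + j] = R.getD (m + j) 1 := by
        rw [List.getD_eq_getElem R 1 (by omega)]
      have e2 : R[j] = R.getD j 1 := by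
        rw [List.getD_eq_getElem R 1 (by omega)]
      rw [e1, e2, hR, ris_getD cs i i' _ _ (by omega), ris_getD cs i i' _ _ (by omega)]
      have harith : 2 * m - 1 - j = (2 * m - 1 - (m + j)) + m := by omega
      rw [harith, g_add]
  have hsplit : R = R.take m ++ R.take m := by
    nth_rw 1 [← List.take_append_drop m R, hdt]
  rw [hsplit, List.count_append]
  exact ⟨_, rfl⟩

theorem liftable : M.IsLiftable (F cs) := by
  intro i i'
  rw [← phi_alt]
  funext p
  obtain ⟨t, ε⟩ := p
  have hπ : π (CoxeterSystem.alternatingWord i i' (2 * M i i')) = 1 := by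
    rw [CoxeterSystem.prod_alternatingWord_eq_mul_pow]
    rw [if_pos (even_two_mul _), Nat.mul_div_cancel_left _ (by norm_num : 0 < 2)]
    rw [one_mul, cs.simple_mul_simple_pow]
  have hcount := count_even cs i i' t
  rw [phi_apply, hπ, if_neg (by rwa [Nat.not_odd_iff_even])]
  simp only [one_mul, inv_one, mul_one]
  rfl

/-- The sign action of `W` on `W × ℤˣ`. -/
noncomputable def rho : W →* Function.End (W × ℤˣ) := cs.lift ⟨F cs, liftable cs⟩

theorem rho_wordProd (ω : List B) : rho cs (π ω) = phi cs ω := by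
  induction ω with
  | nil => simp [phi_nil, CoxeterSystem.wordProd_nil, map_one]
  | cons x ω ih =>
    rw [CoxeterSystem.wordProd_cons, map_mul, ih, phi_cons]
    congr 1
    exact cs.lift_apply_simple (liftable cs) x

theorem count_parity (ω ω' : List B) (hww : π ω = π ω') (t : W) :
    (Odd ((ris ω).count t) ↔ Odd ((ris ω').count t)) := by
  have h1 : phi cs ω (t, 1) = phi cs ω' (t, 1) := by
    rw [← rho_wordProd, ← rho_wordProd, hww]
  rw [phi_apply, phi_apply, hww, Prod.mk.injEq] at h1
  have h2 := h1.2
  constructor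
  · intro ho
    by_contra ho'
    rw [if_pos ho, if_neg ho'] at h2
    exact absurd h2 (by decide)
  · intro ho'
    by_contra ho
    rw [if_neg ho, if_pos ho'] at h2
    exact absurd h2 (by decide)

theorem mem_rightInvSeq_of_rightDescent {ω : List B} (hred : cs.IsReduced ω) {j : B}
    (hdesc : cs.IsRightDescent (π ω) j) : s j ∈ ris ω := by
  obtain ⟨τ, hτred, hτ⟩ := cs.exists_reduced_word' (π ω * s j)
  set ω₁ := τ.concat j with hω₁
  have hπ : π ω₁ = π ω := by
    rw [hω₁, CoxeterSystem.wordProd_concat, ← hτ, cs.simple_mul_simple_cancel_right]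
  have hred₁ : cs.IsReduced ω₁ := by
    unfold CoxeterSystem.IsReduced at hτred ⊢
    rw [hπ, hω₁, List.length_concat, ← hτred, ← hτ]
    exact (cs.isRightDescent_iff.1 hdesc).symm
  have hmem : s j ∈ ris ω₁ := by
    rw [hω₁, cs.rightInvSeq_concat]
    simp
  have hodd : Odd ((ris ω₁).count (s j)) := by
    rw [List.count_eq_one_of_mem (hred₁.nodup_rightInvSeq) hmem]
    exact odd_one
  have := (count_parity cs ω₁ ω hπ (s j)).1 hodd
  exact List.count_pos_iff.1 (Nat.pos_of_ne_zero (by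
    intro h0
    rw [h0] at this
    simp at this))

theorem exchange {ω : List B} (hred : cs.IsReduced ω) {j : B}
    (hdesc : cs.IsRightDescent (π ω) j) :
    ∃ k < ω.length, π ω * s j = π (ω.eraseIdx k) := by
  have hmem := mem_rightInvSeq_of_rightDescent cs hred hdesc
  obtain ⟨k, hk, hEq⟩ := List.mem_iff_getElem.1 hmem
  rw [CoxeterSystem.length_rightInvSeq] at hk
  refine ⟨k, hk, ?_⟩
  rw [← cs.wordProd_mul_getD_rightInvSeq]
  congr 1
  rw [List.getD_eq_getElem _ _ (by rwa [CoxeterSystem.length_rightInvSeq])]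
  exact hEq.symm

theorem lemmaA {w : W} {i : B} (hw : w * w = 1) (hdesc : cs.IsLeftDescent w i)
    (hne : s i * w ≠ w * s i) : ℓ (s i * w * s i) < ℓ w := by
  have hinv : w⁻¹ = w := inv_eq_of_mul_eq_one_left hw
  have hsw : ℓ (s i * w) + 1 = ℓ w := cs.isLeftDescent_iff.1 hdesc
  have hws : ℓ (w * s i) = ℓ (s i * w) := by
    calc ℓ (w * s i) = ℓ ((w * s i)⁻¹) := (cs.length_inv _).symm
    _ = ℓ (s i * w) := by rw [mul_inv_rev, cs.inv_simple, hinv]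
  rcases cs.length_mul_simple (s i * w) i with hgt | hlt
  swap
  · omega
  · -- ℓ (s i * w * s i) = ℓ (s i * w) + 1 = ℓ w ; derive a contradiction
    exfalso
    obtain ⟨τ, hτred, hτ⟩ := cs.exists_reduced_word' (w * s i)
    set ω := i :: τ with hω
    have hπω : π ω = s i * w * s i := by
      rw [hω, CoxeterSystem.wordProd_cons, ← hτ, mul_assoc]
    have hredω : cs.IsReduced ω := by
      unfold CoxeterSystem.IsReduced at hτred ⊢
      rw [hπω, hω, List.length_cons, ← hτred, ← hτ, hgt, hws]
    have hdescω : cs.IsRightDescent (π ω) i := by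
      unfold CoxeterSystem.IsRightDescent
      rw [hπω, cs.simple_mul_simple_cancel_right, hgt]
      omega
    obtain ⟨k, hk, hEq⟩ := exchange cs hredω hdescω
    rw [hπω, cs.simple_mul_simple_cancel_right] at hEq
    rcases k with _ | k'
    · -- erased the first letter : s i * w = π τ = w * s i
      rw [hω, List.eraseIdx_cons_zero, ← hτ] at hEq
      exact hne hEq
    · -- erased a letter of τ : w = π (τ.eraseIdx k'), too short
      rw [hω, List.eraseIdx_cons_succ, CoxeterSystem.wordProd_cons] at hEq
      have hwEq : w = π (τ.eraseIdx k') := mul_left_cancel hEq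
      have hlen2 : ℓ w ≤ (τ.eraseIdx k').length := by
        rw [hwEq]
        exact cs.length_wordProd_le _
      have hk' : k' < τ.length := by
        rw [hω, List.length_cons] at hk
        omega
      have hlen3 : (τ.eraseIdx k').length + 1 = τ.length := List.length_eraseIdx_add_one hk'
      have hτlen : τ.length = ℓ (w * s i) := by rw [hτ]; exact hτred.symm
      omega

end M1Aux

open Finsupp

/-- over a field `K` in which `2` is invertible, the module `M₁` with basis
`(a_w)` indexed by the involutions of `W`, where `s·a_w = a_w + 2a_{sw}` if `sw = ws > w`,
`s·a_w = -a_w` if `sw = ws < w`, `s·a_w = a_{sws}` if `sw ≠ ws`, is generated as a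
`W`-module by the single element `a₁`: any submodule containing `a₁` and stable under all
the operators `σ s` contains every basis vector `a_w`. -/
theorem M1_generated_by_a1 {B W : Type*} [Group W] [Finite W] {M : CoxeterMatrix B}
    (cs : CoxeterSystem M W) (K : Type*) [Field K] (h2 : (2 : K) ≠ 0)
    (σ : B → ((W →₀ K) →ₗ[K] (W →₀ K)))
    (h1 : ∀ (i : B) (w : W), w * w = 1 →
      cs.simple i * w = w * cs.simple i →
      cs.length w < cs.length (cs.simple i * w) →
      σ i (single w 1) = single w 1 + 2 • single (cs.simple i * w) 1)
    (h2' : ∀ (i : B) (w : W), w * w = 1 →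
      cs.simple i * w = w * cs.simple i →
      cs.length (cs.simple i * w) < cs.length w →
      σ i (single w 1) = - single w 1)
    (h3 : ∀ (i : B) (w : W), w * w = 1 →
      cs.simple i * w ≠ w * cs.simple i →
      σ i (single w 1) = single (cs.simple i * w * cs.simple i) 1) :
    ∀ N : Submodule K (W →₀ K), single (1 : W) (1 : K) ∈ N →
      (∀ (i : B), ∀ m ∈ N, σ i m ∈ N) →
      ∀ w : W, w * w = 1 → single w (1 : K) ∈ N := by
  classical
  intro N hN hσ
  suffices key : ∀ (n : ℕ) (w : W), cs.length w = n → w * w = 1 → single w (1:K) ∈ N by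
    exact fun w hw => key (cs.length w) w rfl hw
  intro n
  induction n using Nat.strong_induction_on with
  | _ n ih =>
    intro w hlen hw
    rcases eq_or_ne w 1 with rfl | hne
    · exact hN
    obtain ⟨i, hi⟩ := cs.exists_leftDescent_of_ne_one hne
    by_cases hc : cs.simple i * w = w * cs.simple i
    · -- commuting descent
      set w' := cs.simple i * w with hw'def
      have hww' : cs.simple i * w' = w := by
        rw [hw'def]
        exact cs.simple_mul_simple_cancel_left i
      have hinv' : w' * w' = 1 := by
        calc w' * w' = cs.simple i * (w * cs.simple i) * w := by rw [hw'def]; group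
        _ = cs.simple i * (cs.simple i * w) * w := by rw [← hc]
        _ = (cs.simple i * cs.simple i) * (w * w) := by group
        _ = 1 := by rw [cs.simple_mul_simple_self, hw, one_mul]
      have hlt : cs.length w' < n := by rw [← hlen]; exact hi
      have hm' := ih _ hlt w' rfl hinv'
      have hcomm' : cs.simple i * w' = w' * cs.simple i := by
        rw [hww', hw'def, mul_assoc, ← hc, ← mul_assoc, cs.simple_mul_simple_self, one_mul]
      have hlen' : cs.length w' < cs.length (cs.simple i * w') := by rw [hww']; exact hi
      have hσm := hσ i _ hm'
      rw [h1 i w' hinv' hcomm' hlen', hww'] at hσm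
      have hsub := N.sub_mem hσm hm'
      have habel : single w' (1:K) + 2 • single w (1:K) - single w' (1:K)
          = 2 • single w (1:K) := by abel
      rw [habel] at hsub
      have hx : (2 : ℕ) • single w (1:K) = (2:K) • single w (1:K) := by
        rw [← Nat.cast_smul_eq_nsmul K]
        norm_num
      have hmem2 : (2:K) • single w (1:K) ∈ N := by rw [← hx]; exact hsub
      have hfin : single w (1:K) = (2:K)⁻¹ • ((2:K) • single w (1:K)) := by
        rw [smul_smul, inv_mul_cancel₀ h2, one_smul]
      rw [hfin]
      exact N.smul_mem _ hmem2
    · -- non-commuting descent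
      set w' := cs.simple i * w * cs.simple i with hw'def
      have hlt : cs.length w' < n := by
        rw [← hlen, hw'def]
        exact M1Aux.lemmaA cs hw hi hc
      have hinv' : w' * w' = 1 := by
        calc w' * w' = cs.simple i * w * (cs.simple i * cs.simple i) * w * cs.simple i := by
              rw [hw'def]; group
        _ = cs.simple i * (w * w) * cs.simple i := by
              rw [cs.simple_mul_simple_self]; group
        _ = 1 := by rw [hw, mul_one, cs.simple_mul_simple_self]
      have hm' := ih _ hlt w' rfl hinv'
      have hswp : cs.simple i * w' = w * cs.simple i := by
        rw [hw'def, ← mul_assoc, ← mul_assoc, cs.simple_mul_simple_self, one_mul]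
      have hw's : w' * cs.simple i = cs.simple i * w := by
        rw [hw'def, cs.simple_mul_simple_cancel_right]
      have hnc' : cs.simple i * w' ≠ w' * cs.simple i := by
        rw [hswp, hw's]
        exact fun h => hc h.symm
      have hσm := hσ i _ hm'
      rw [h3 i w' hinv' hnc'] at hσm
      have hfin : cs.simple i * w' * cs.simple i = w := by
        rw [hswp, cs.simple_mul_simple_cancel_right]
      rwa [hfin] at hσm
end

section
/- Let W be a Weyl group acting on its reflection representation R over ℚ, and for an involution w ∈ W let h(w) = dim R^{-w} be the dimension of the (-1)-eigenspace of w on R. If s ∈ S and w is an involution with sw = ws and l(sw) > l(w), then h(sw) ≥ h(w) + 1. -/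
open Module

/-- let `W` be a Weyl group acting on its reflection representation `R` over `ℚ`
(with simple roots `bα` forming a basis, `ρ(s_i)` a reflection with `(-1)`-eigenspace the line
through `α_i`, and the standard positivity criterion for lengths), and for an involution `w`
let `h(w) = dim R^{-w}` be the dimension of the `(-1)`-eigenspace of `w`. If `s` is a simple
reflection and `w` an involution with `sw = ws` and `l(sw) > l(w)`, then `h(sw) ≥ h(w) + 1`. -/
theorem dim_minus_one_eigenspace_increases {B W : Type*} [Group W] [Finite W]
    {M : CoxeterMatrix B} (cs : CoxeterSystem M W)
    (R : Type*) [AddCommGroup R] [Module ℚ R] [FiniteDimensional ℚ R]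
    (ρ : Representation ℚ W R) (hfaithful : Function.Injective ρ)
    (bα : Basis B ℚ R)
    (hrefl : ∀ i : B, Module.End.eigenspace (ρ (cs.simple i)) (-1) = ℚ ∙ (bα i))
    (hpos : ∀ (w : W) (i : B), cs.length w < cs.length (w * cs.simple i) ↔
      ∀ j : B, 0 ≤ bα.repr (ρ w (bα i)) j)
    (i : B) (w : W) (hw : w * w = 1)
    (hc : cs.simple i * w = w * cs.simple i)
    (hl : cs.length w < cs.length (cs.simple i * w)) :
    Module.finrank ℚ (Module.End.eigenspace (ρ w) (-1)) + 1 ≤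
      Module.finrank ℚ (Module.End.eigenspace (ρ (cs.simple i * w)) (-1)) := by
  set s := cs.simple i with hs
  set α := bα i with hα
  have hαne : α ≠ 0 := bα.ne_zero i
  -- ρ s α = -α
  have hsα : ρ s α = -α := by
    have : α ∈ Module.End.eigenspace (ρ s) (-1) := by
      rw [hrefl i]; exact Submodule.mem_span_singleton_self _
    rw [Module.End.mem_eigenspace_iff] at this
    simpa using this
  -- apply of composite
  have happ : ∀ (u v : W) (x : R), ρ (u * v) x = ρ u (ρ v x) := by
    intro u v x; rw [map_mul]; rfl
  -- ρ w α is in (-1)-eigenspace of ρ s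
  have hwαmem : ρ w α ∈ (ℚ ∙ α) := by
    rw [← hrefl i, Module.End.mem_eigenspace_iff]
    have : ρ s (ρ w α) = ρ w (ρ s α) := by
      rw [← happ, ← happ, hc]
    rw [this, hsα, map_neg]
    simp
  obtain ⟨c, hcα⟩ := Submodule.mem_span_singleton.mp hwαmem
  -- positivity gives c ≥ 0
  have hl' : cs.length w < cs.length (w * s) := by
    rw [← hc]; exact hl
  have hcoords := (hpos w i).mp hl' i
  have hci : bα.repr (ρ w α) i = c := by
    rw [← hcα, map_smul, bα.repr_self]
    simp
  rw [hci] at hcoords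
  -- involution gives c * c = 1
  have hc2 : c * c = 1 := by
    have h1 : ρ w (ρ w α) = α := by
      rw [← happ, hw, map_one]; rfl
    rw [← hcα, map_smul, ← hcα, smul_smul] at h1
    have hz : (c * c - 1) • α = 0 := by
      rw [sub_smul, one_smul, h1, sub_self]
    rcases smul_eq_zero.mp hz with h | h
    · linarith [sub_eq_zero.mp h]
    · exact absurd h hαne
  have hc1 : c = 1 := by nlinarith
  have hwα : ρ w α = α := by rw [← hcα, hc1, one_smul]
  -- E₋₁(ρ w) ≤ E₋₁(ρ (s * w))
  have hle : Module.End.eigenspace (ρ w) (-1) ≤ Module.End.eigenspace (ρ (s * w)) (-1) := by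
    intro v hv
    rw [Module.End.mem_eigenspace_iff] at hv ⊢
    have hv' : ρ w v = -v := by simpa using hv
    have hmem : v - ρ s v ∈ (ℚ ∙ α) := by
      rw [← hrefl i, Module.End.mem_eigenspace_iff]
      have hss : ρ s (ρ s v) = v := by
        rw [← happ, cs.simple_mul_simple_self i, map_one]; rfl
      rw [map_sub, hss]
      module
    obtain ⟨d, hd⟩ := Submodule.mem_span_singleton.mp hmem
    have hwd : ρ w (v - ρ s v) = -(v - ρ s v) := by
      rw [map_sub, hv', ← happ, ← hc, happ, hv', map_neg]
      module
    rw [← hd, map_smul, hwα] at hwd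
    have hd0 : d = 0 := by
      have h2 : (2 * d) • α = 0 := by
        rw [two_mul, add_smul]
        rw [eq_neg_iff_add_eq_zero] at hwd
        exact hwd
      rcases smul_eq_zero.mp h2 with h | h
      · linarith [mul_eq_zero.mp h |>.resolve_left (by norm_num : (2:ℚ) ≠ 0)]
      · exact absurd h hαne
    have hsv : ρ s v = v := by
      have hvz : v - ρ s v = 0 := by rw [← hd, hd0, zero_smul]
      linear_combination (norm := module) -hvz
    rw [happ, hv', map_neg, hsv]
    module
  have hαmem : α ∈ Module.End.eigenspace (ρ (s * w)) (-1) := by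
    rw [Module.End.mem_eigenspace_iff, happ, hwα, hsα]
    module
  have hαnot : α ∉ Module.End.eigenspace (ρ w) (-1) := by
    intro hmem
    rw [Module.End.mem_eigenspace_iff, hwα] at hmem
    apply hαne
    have h2 : (2 : ℚ) • α = 0 := by
      simp only [neg_smul, one_smul] at hmem
      linear_combination (norm := module) hmem
    simpa using smul_eq_zero.mp h2 |>.resolve_left (by norm_num)
  have hsub : Module.End.eigenspace (ρ w) (-1) < Module.End.eigenspace (ρ (s * w)) (-1) :=
    lt_of_le_of_ne hle (fun h => hαnot (h ▸ hαmem))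
  have := Submodule.finrank_lt_finrank_of_lt hsub
  omega
end

section
/- Let W be a Weyl group, s ∈ S, and w an involution with sw = ws > w. Then the line R^{-s} (the (-1)-eigenspace of s on the reflection representation R) is contained in R^w (the fixed space of w), and R^{-w} is contained in R^s; consequently R^{-s} ⊕ R^{-w} ⊆ R^{-sw}. -/
open Module

/-- let `W` be a Weyl group acting on its reflection representation `R` over `ℚ`
(with simple roots `bα` forming a basis, `ρ(s_i)` a reflection with `(-1)`-eigenspace the line
through `α_i`, and the standard positivity criterion for lengths). If `s` is a simple
reflection and `w` an involution with `sw = ws > w`, then the line `R^{-s}` is contained in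
the fixed space `R^w`, and `R^{-w} ⊆ R^s`; consequently `R^{-s} ⊕ R^{-w} ⊆ R^{-sw}`. -/
theorem eigenspace_inclusions_for_commuting_involution {B W : Type*} [Group W] [Finite W]
    {M : CoxeterMatrix B} (cs : CoxeterSystem M W)
    (R : Type*) [AddCommGroup R] [Module ℚ R] [FiniteDimensional ℚ R]
    (ρ : Representation ℚ W R) (hfaithful : Function.Injective ρ)
    (bα : Basis B ℚ R)
    (hrefl : ∀ i : B, Module.End.eigenspace (ρ (cs.simple i)) (-1) = ℚ ∙ (bα i))
    (hpos : ∀ (w : W) (i : B), cs.length w < cs.length (w * cs.simple i) ↔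
      ∀ j : B, 0 ≤ bα.repr (ρ w (bα i)) j)
    (i : B) (w : W) (hw : w * w = 1)
    (hc : cs.simple i * w = w * cs.simple i)
    (hl : cs.length w < cs.length (cs.simple i * w)) :
    Module.End.eigenspace (ρ (cs.simple i)) (-1) ≤ Module.End.eigenspace (ρ w) 1 ∧
    Module.End.eigenspace (ρ w) (-1) ≤ Module.End.eigenspace (ρ (cs.simple i)) 1 ∧
    Disjoint (Module.End.eigenspace (ρ (cs.simple i)) (-1))
      (Module.End.eigenspace (ρ w) (-1)) ∧
    Module.End.eigenspace (ρ (cs.simple i)) (-1) ⊔ Module.End.eigenspace (ρ w) (-1) ≤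
      Module.End.eigenspace (ρ (cs.simple i * w)) (-1) := by

  classical
  set s := cs.simple i with hsdef
  set α := bα i with hαdef
  have hs2 : ρ s * ρ s = 1 := by rw [← map_mul, cs.simple_mul_simple_self i, map_one]
  have hαmem : α ∈ Module.End.eigenspace (ρ s) (-1) := by
    rw [hrefl i]; exact Submodule.mem_span_singleton_self _
  have hsα : ρ s α = -α := by
    have := Module.End.mem_eigenspace_iff.mp hαmem
    simpa using this
  have hcomm : ∀ x : R, ρ s (ρ w x) = ρ w (ρ s x) := by
    intro x
    have := congrArg (fun u => ρ u x) hc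
    simpa [map_mul] using this
  -- ρ w α ∈ span α
  have hwα_mem : ρ w α ∈ (ℚ ∙ α) := by
    rw [← hrefl i, Module.End.mem_eigenspace_iff]
    rw [hcomm α, hsα, map_neg]
    simp
  obtain ⟨c, hcα⟩ := Submodule.mem_span_singleton.mp hwα_mem
  have hαne : α ≠ 0 := bα.ne_zero i
  have hcpos : 0 ≤ c := by
    have hl' : cs.length w < cs.length (w * s) := by rwa [hc] at hl
    have := (hpos w i).mp hl' i
    rw [← hcα] at this
    have h1 : (bα.repr α) i = 1 := by rw [hαdef]; simp
    simpa [h1] using this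
  have hc1 : c = 1 := by
    have hw2 : ρ w (ρ w α) = α := by
      rw [← Module.End.mul_apply, ← map_mul, hw, map_one]; rfl
    rw [← hcα, map_smul, ← hcα, smul_smul] at hw2
    have hcc : c * c = 1 := by
      by_contra h
      have : (c * c - 1) • α = 0 := by
        rw [sub_smul, one_smul, hw2, sub_self]
      rcases smul_eq_zero.mp this with h' | h'
      · exact h (by linarith [sub_eq_zero.mp (by linarith [h'] : c * c - 1 = 0)])
      · exact hαne h'
    nlinarith
  have hwα : ρ w α = α := by rw [← hcα, hc1, one_smul]
  -- Claim 1
  have claim1 : Module.End.eigenspace (ρ s) (-1) ≤ Module.End.eigenspace (ρ w) 1 := by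
    rw [hrefl i, Submodule.span_singleton_le_iff_mem, Module.End.mem_eigenspace_iff]
    simpa using hwα
  -- Claim 2
  have claim2 : ∀ v ∈ Module.End.eigenspace (ρ w) (-1), ρ s v = v := by
    intro v hv
    have hwv : ρ w v = -v := by
      have := Module.End.mem_eigenspace_iff.mp hv; simpa using this
    set u := v - ρ s v with hudef
    have hsu : ρ s u = -u := by
      rw [hudef, map_sub, ← Module.End.mul_apply (ρ s) (ρ s), hs2]
      simp [neg_sub]
    have humem : u ∈ (ℚ ∙ α) := by
      rw [← hrefl i, Module.End.mem_eigenspace_iff]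
      simpa using hsu
    obtain ⟨t, htu⟩ := Submodule.mem_span_singleton.mp humem
    have hwu : ρ w u = u := by rw [← htu, map_smul, hwα]
    have hwu' : ρ w u = -u := by
      rw [hudef, map_sub, hwv, ← hcomm v, hwv, map_neg]
      abel
    have hu0 : u = 0 := by
      rw [hwu'] at hwu
      have h2 : (2 : ℚ) • u = 0 := by
        rw [two_smul]; nth_rewrite 1 [← hwu]; abel
      rcases smul_eq_zero.mp h2 with h | h
      · norm_num at h
      · exact h
    have : v - ρ s v = 0 := hu0
    linear_combination (norm := module) -this
  have claim2' : Module.End.eigenspace (ρ w) (-1) ≤ Module.End.eigenspace (ρ s) 1 := by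
    intro v hv
    rw [Module.End.mem_eigenspace_iff, one_smul]
    exact claim2 v hv
  refine ⟨claim1, claim2', ?_, ?_⟩
  · rw [Submodule.disjoint_def]
    intro v hvs hvw
    have h1 : ρ s v = -v := by
      have := Module.End.mem_eigenspace_iff.mp hvs; simpa using this
    have h2 : ρ s v = v := claim2 v hvw
    have hvv : -v = v := h1.symm.trans h2
    have h2v : (2 : ℚ) • v = 0 := by
      rw [two_smul]; nth_rewrite 1 [← hvv]; abel
    rcases smul_eq_zero.mp h2v with h | h
    · norm_num at h
    · exact h
  · apply sup_le
    · intro v hv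
      have hsv : ρ s v = -v := by
        have := Module.End.mem_eigenspace_iff.mp hv; simpa using this
      have hwv : ρ w v = v := by
        have := Module.End.mem_eigenspace_iff.mp (claim1 hv); simpa using this
      rw [Module.End.mem_eigenspace_iff, map_mul, Module.End.mul_apply, hwv, hsv]
      simp
    · intro v hv
      have hwv : ρ w v = -v := by
        have := Module.End.mem_eigenspace_iff.mp hv; simpa using this
      have hsv : ρ s v = v := claim2 v hv
      rw [Module.End.mem_eigenspace_iff, map_mul, Module.End.mul_apply, hwv, map_neg, hsv]
      simp
end

section
/- Let G be a connected semisimple group over an algebraically closed field of characteristic p with Frobenius φ' for a split 𝔽_q-structure, B the variety of Borel subgroups, and F : B × B → B × B given by F(B,B') = (φ'(B'), φ'(B)). Then a G-orbit O_w ⊆ B × B (corresponding to w in the Weyl group) contains an F-fixed point only if w is an involution, and conversely O_w is F-stable for every involution w; thus (B × B)^F = ⊔_{w ∈ I} O_w^F where I is the set of involutions. -/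
/-- abstract form of the orbit decomposition of `(B × B)^F`. Here `Bv` plays
the role of the flag variety of a connected semisimple group `G`, `π : Bv × Bv → W` sends a
pair of Borel subgroups to the Weyl group element `w` indexing its `G`-orbit `O_w`
(so `π x = w ↔ x ∈ O_w`, with `π (B',B) = π (B,B')⁻¹`), and `φ` is a split Frobenius
(preserving each orbit). Let `F (B,B') = (φ B', φ B)`. Then an orbit `O_w` contains an
`F`-fixed point only if `w` is an involution; `O_w` is `F`-stable for every involution `w`;
and `(Bv × Bv)^F` is the union over involutions `w` of the fixed-point sets `O_w^F`. -/
theorem frobenius_fixed_points_decomposition {W : Type*} [Group W] {Bv : Type*}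
    (π : Bv × Bv → W) (φ : Bv → Bv)
    (horbit_inv : ∀ x : Bv × Bv, π (x.2, x.1) = (π x)⁻¹)
    (hφ : ∀ x : Bv × Bv, π (φ x.1, φ x.2) = π x) :
    (∀ x : Bv × Bv, (φ x.2, φ x.1) = x → (π x) * (π x) = 1) ∧
    (∀ w : W, w * w = 1 → ∀ x : Bv × Bv, π x = w → π (φ x.2, φ x.1) = w) ∧
    ({x : Bv × Bv | (φ x.2, φ x.1) = x} =
      ⋃ w ∈ {w : W | w * w = 1}, {x : Bv × Bv | (φ x.2, φ x.1) = x ∧ π x = w}) := by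
  have key : ∀ x : Bv × Bv, π (φ x.2, φ x.1) = (π x)⁻¹ := fun x => by
    have := hφ (x.2, x.1)
    simpa [horbit_inv x] using this
  refine ⟨fun x hx => ?_, fun w hw x hx => ?_, ?_⟩
  · have := key x
    rw [hx] at this
    rw [← inv_eq_iff_mul_eq_one]
    exact this.symm
  · rw [key x, hx, inv_eq_iff_mul_eq_one.mpr hw]
  · ext x
    simp only [Set.mem_setOf_eq, Set.mem_iUnion]
    constructor
    · intro hx
      refine ⟨π x, ?_, hx, rfl⟩
      have := key x
      rw [hx] at this
      rw [← inv_eq_iff_mul_eq_one]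
      exact this.symm
    · rintro ⟨w, _, hx, _⟩
      exact hx
end

section
/- Let W be a Coxeter group, I its set of involutions, and suppose given the free ℤ[u,u⁻¹]-module M on basis (a_w)_{w∈I} with the Hecke-type operators T_s as in the standard formulas. Suppose f : M → M is a ℤ-linear map satisfying: f(uⁿ m) = u⁻ⁿ f(m) for all m ∈ M, n ∈ ℤ; f(a₁) = 0; and f((T_s+1)m) = u⁻²(T_s+1)f(m) for all m ∈ M, s ∈ S. Then f = 0. -/
open Finsupp LaurentPolynomial

namespace BarInvolutionAux
open CoxeterSystem List Classical

variable {B W : Type*} [Group W] {M : CoxeterMatrix B} (cs : CoxeterSystem M W)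


/-- sign-flip map for the Bourbaki permutation representation -/
noncomputable def eta (i : B) : W × ℤˣ → W × ℤˣ :=
  fun p => (cs.simple i * p.1 * (cs.simple i)⁻¹,
    (if p.1 = cs.simple i then -1 else 1) * p.2)

lemma simple_conj_eq_iff (i : B) (t x : W) :
    cs.simple i * t * (cs.simple i)⁻¹ = x ↔ t = (cs.simple i)⁻¹ * x * cs.simple i := by
  constructor
  · rintro rfl; group
  · rintro rfl; group

lemma eta_involutive (i : B) : Function.Involutive (eta cs i) := by
  rintro ⟨t, e⟩
  simp only [eta]
  refine Prod.ext ?_ ?_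
  · show cs.simple i * (cs.simple i * t * (cs.simple i)⁻¹) * (cs.simple i)⁻¹ = t
    rw [cs.inv_simple, mul_assoc (cs.simple i) t, cs.simple_mul_simple_cancel_left,
      cs.simple_mul_simple_cancel_right]
  · show (if cs.simple i * t * (cs.simple i)⁻¹ = cs.simple i then (-1 : ℤˣ) else 1) *
      ((if t = cs.simple i then (-1 : ℤˣ) else 1) * e) = e
    have hcond : (cs.simple i * t * (cs.simple i)⁻¹ = cs.simple i) ↔ (t = cs.simple i) := by
      rw [simple_conj_eq_iff]
      constructor
      · rintro rfl; group
      · rintro rfl; group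
    rw [if_congr hcond rfl rfl]
    split_ifs <;> simp

noncomputable def etaPerm (i : B) : Equiv.Perm (W × ℤˣ) := (eta_involutive cs i).toPerm

lemma etaPerm_apply (i : B) (p : W × ℤˣ) : etaPerm cs i p = eta cs i p := rfl

lemma conj_eq_iff (g t x : W) : g * t * g⁻¹ = x ↔ t = g⁻¹ * x * g := by
  constructor
  · rintro rfl; group
  · rintro rfl; group

lemma simple_conj_pow (i j : B) (k : ℕ) :
    cs.simple j * (cs.simple i * cs.simple j) ^ k * (cs.simple j)⁻¹ =
      ((cs.simple i * cs.simple j)⁻¹) ^ k := by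
  have base : MulAut.conj (cs.simple j) (cs.simple i * cs.simple j)
      = (cs.simple i * cs.simple j)⁻¹ := by
    rw [MulAut.conj_apply, mul_inv_rev, cs.inv_simple, cs.inv_simple, mul_assoc,
      cs.simple_mul_simple_cancel_right]
  calc cs.simple j * (cs.simple i * cs.simple j) ^ k * (cs.simple j)⁻¹
      = MulAut.conj (cs.simple j) ((cs.simple i * cs.simple j) ^ k) := by
        rw [MulAut.conj_apply]
    _ = (MulAut.conj (cs.simple j) (cs.simple i * cs.simple j)) ^ k := by
        rw [map_pow]
    _ = ((cs.simple i * cs.simple j)⁻¹) ^ k := by rw [base]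

lemma simple_mul_pow (i j : B) (k : ℕ) :
    cs.simple j * (cs.simple i * cs.simple j) ^ k =
      ((cs.simple i * cs.simple j)⁻¹) ^ k * cs.simple j := by
  have := simple_conj_pow cs i j k
  calc cs.simple j * (cs.simple i * cs.simple j) ^ k
      = (cs.simple j * (cs.simple i * cs.simple j) ^ k * (cs.simple j)⁻¹) * cs.simple j := by
        group
    _ = ((cs.simple i * cs.simple j)⁻¹) ^ k * cs.simple j := by rw [this]

lemma etaPerm_iter (i j : B) (k : ℕ) (t : W) (e : ℤˣ) :
    ((etaPerm cs i * etaPerm cs j) ^ k) (t, e) =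
      ((cs.simple i * cs.simple j) ^ k * t * ((cs.simple i * cs.simple j)⁻¹) ^ k,
       (∏ r ∈ Finset.range (2 * k),
         (if t = ((cs.simple i * cs.simple j)⁻¹) ^ r * cs.simple j then (-1 : ℤˣ) else 1)) * e) := by
  set a := cs.simple i with ha
  set b := cs.simple j with hb
  set P := a * b with hP
  have hbab : b⁻¹ * a * b = P⁻¹ * b := by
    rw [hP, mul_inv_rev, ha, hb, cs.inv_simple, cs.inv_simple]
  have hbP : ∀ m : ℕ, b * P ^ m = (P⁻¹) ^ m * b := by
    intro m
    rw [hP, ha, hb]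
    exact simple_mul_pow cs i j m
  induction k with
  | zero => simp
  | succ k IH =>
    have cond1 : (P ^ k * t * (P⁻¹) ^ k = b) ↔ (t = (P⁻¹) ^ (2 * k) * b) := by
      have e1 : (P⁻¹) ^ k * b * P ^ k = (P⁻¹) ^ (2 * k) * b := by
        rw [mul_assoc, hbP k, ← mul_assoc, ← pow_add, two_mul]
      rw [inv_pow, conj_eq_iff, ← inv_pow, e1]
    have cond2 : (b * (P ^ k * t * (P⁻¹) ^ k) * b⁻¹ = a) ↔ (t = (P⁻¹) ^ (2 * k + 1) * b) := by
      have e2 : (P⁻¹) ^ k * (b⁻¹ * a * b) * P ^ k = (P⁻¹) ^ (2 * k + 1) * b := by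
        rw [hbab, ← mul_assoc, ← pow_succ, mul_assoc, hbP k, ← mul_assoc, ← pow_add]
        have : k + 1 + k = 2 * k + 1 := by omega
        rw [this]
      rw [conj_eq_iff, inv_pow, conj_eq_iff, ← inv_pow, e2]
    rw [pow_succ', Equiv.Perm.mul_apply, IH, Equiv.Perm.mul_apply, etaPerm_apply, etaPerm_apply]
    simp only [eta, ← ha, ← hb, ← hP]
    refine Prod.ext ?_ ?_
    · show a * (b * (P ^ k * t * (P⁻¹) ^ k) * b⁻¹) * a⁻¹
        = P ^ (k + 1) * t * (P⁻¹) ^ (k + 1)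
      rw [pow_succ' P k, pow_succ (P⁻¹) k, hP]
      group
    · show (if b * (P ^ k * t * (P⁻¹) ^ k) * b⁻¹ = a then (-1 : ℤˣ) else 1) *
        ((if P ^ k * t * (P⁻¹) ^ k = b then (-1 : ℤˣ) else 1) *
          ((∏ r ∈ Finset.range (2 * k), (if t = (P⁻¹) ^ r * b then (-1 : ℤˣ) else 1)) * e))
        = (∏ r ∈ Finset.range (2 * (k + 1)), (if t = (P⁻¹) ^ r * b then (-1 : ℤˣ) else 1)) * e
      rw [if_congr cond2 rfl rfl, if_congr cond1 rfl rfl]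
      have h2 : 2 * (k + 1) = 2 * k + 1 + 1 := by omega
      rw [h2, Finset.prod_range_succ, Finset.prod_range_succ]
      ac_rfl

lemma etaPerm_liftable : M.IsLiftable (etaPerm cs) := by
  intro i j
  apply Equiv.ext
  rintro ⟨t, e⟩
  rw [etaPerm_iter, Equiv.Perm.one_apply]
  have hp : (cs.simple i * cs.simple j) ^ M i j = 1 := cs.simple_mul_simple_pow i j
  have hp' : ((cs.simple i * cs.simple j)⁻¹) ^ M i j = 1 := by
    rw [inv_pow, hp, inv_one]
  refine Prod.ext ?_ ?_
  · show (cs.simple i * cs.simple j) ^ M i j * t * ((cs.simple i * cs.simple j)⁻¹) ^ M i j = t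
    rw [hp, hp', one_mul, mul_one]
  · show (∏ r ∈ Finset.range (2 * M i j),
        (if t = ((cs.simple i * cs.simple j)⁻¹) ^ r * cs.simple j then (-1 : ℤˣ) else 1)) * e = e
    have : (∏ r ∈ Finset.range (2 * M i j),
        (if t = ((cs.simple i * cs.simple j)⁻¹) ^ r * cs.simple j then (-1 : ℤˣ) else 1)) = 1 := by
      rw [two_mul, Finset.prod_range_add]
      have heq : ∀ r, ((cs.simple i * cs.simple j)⁻¹) ^ (M i j + r)
          = ((cs.simple i * cs.simple j)⁻¹) ^ r := by
        intro r
        rw [pow_add, hp', one_mul]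
      have : ∀ r ∈ Finset.range (M i j),
          (if t = ((cs.simple i * cs.simple j)⁻¹) ^ (M i j + r) * cs.simple j
            then (-1 : ℤˣ) else 1)
          = (if t = ((cs.simple i * cs.simple j)⁻¹) ^ r * cs.simple j then (-1 : ℤˣ) else 1) := by
        intro r _
        rw [heq r]
      rw [Finset.prod_congr rfl this, Int.units_mul_self]
    rw [this, one_mul]

noncomputable def rho : W →* Equiv.Perm (W × ℤˣ) := cs.lift ⟨etaPerm cs, etaPerm_liftable cs⟩

lemma rho_simple (i : B) : rho cs (cs.simple i) = etaPerm cs i :=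
  cs.lift_apply_simple (etaPerm_liftable cs) i

lemma rho_word (ω : List B) (t : W) (e : ℤˣ) :
    rho cs (cs.wordProd ω) (t, e) =
      (cs.wordProd ω * t * (cs.wordProd ω)⁻¹,
       ((-1 : ℤˣ) ^ ((cs.rightInvSeq ω).count t)) * e) := by
  induction ω with
  | nil => simp [wordProd_nil]
  | cons i ω IH =>
    rw [cs.wordProd_cons, map_mul, Equiv.Perm.mul_apply, IH, rho_simple, etaPerm_apply]
    have hris : cs.rightInvSeq (i :: ω)
        = ((cs.wordProd ω)⁻¹ * cs.simple i * cs.wordProd ω) :: cs.rightInvSeq ω := rfl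
    simp only [eta, hris, List.count_cons, beq_iff_eq]
    refine Prod.ext ?_ ?_
    · show cs.simple i * (cs.wordProd ω * t * (cs.wordProd ω)⁻¹) * (cs.simple i)⁻¹
        = (cs.simple i * cs.wordProd ω) * t * (cs.simple i * cs.wordProd ω)⁻¹
      group
    · show (if cs.wordProd ω * t * (cs.wordProd ω)⁻¹ = cs.simple i then (-1 : ℤˣ) else 1) *
        ((-1 : ℤˣ) ^ ((cs.rightInvSeq ω).count t) * e)
        = (-1 : ℤˣ) ^ ((cs.rightInvSeq ω).count t +
            if (cs.wordProd ω)⁻¹ * cs.simple i * cs.wordProd ω = t then 1 else 0) * e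
      have hcond : (cs.wordProd ω * t * (cs.wordProd ω)⁻¹ = cs.simple i)
          ↔ ((cs.wordProd ω)⁻¹ * cs.simple i * cs.wordProd ω = t) := by
        rw [conj_eq_iff, eq_comm]
      rw [if_congr hcond rfl rfl, pow_add]
      split_ifs with h
      · rw [pow_one]
        rw [mul_comm ((-1 : ℤˣ) ^ ((cs.rightInvSeq ω).count t)) (-1 : ℤˣ), mul_assoc]
      · rw [pow_zero, mul_one, one_mul]

lemma count_parity (ω α : List B) (h : cs.wordProd ω = cs.wordProd α) (t : W) :
    ((-1 : ℤˣ) ^ ((cs.rightInvSeq ω).count t)) = (-1 : ℤˣ) ^ ((cs.rightInvSeq α).count t) := by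
  have h1 := rho_word cs ω t 1
  have h2 := rho_word cs α t 1
  rw [h, h2] at h1
  have := congrArg Prod.snd h1
  simpa using this.symm

lemma neg_one_ne_one' : (-1 : ℤˣ) ≠ 1 := by decide

lemma mem_ris_of_descent {ω : List B} (hω : cs.IsReduced ω) {i : B}
    (hd : cs.length (cs.wordProd ω * cs.simple i) < cs.length (cs.wordProd ω)) :
    cs.simple i ∈ cs.rightInvSeq ω := by
  obtain ⟨α, hα_len, hα⟩ := cs.exists_reduced_word (cs.wordProd ω * cs.simple i)
  have hαred : cs.IsReduced α := by
    exact hα_len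
  have hprod : cs.wordProd (α.concat i) = cs.wordProd ω := by
    rw [List.concat_eq_append, cs.wordProd_append, cs.wordProd_singleton, ← hα,
      cs.simple_mul_simple_cancel_right]
  have hnotmem : cs.simple i ∉ cs.rightInvSeq α := by
    intro hmem
    have h2 := (cs.isRightInversion_of_mem_rightInvSeq hαred hmem).2
    rw [← hα, cs.simple_mul_simple_cancel_right] at h2
    omega
  have hcount : (cs.rightInvSeq (α.concat i)).count (cs.simple i) = 1 := by
    rw [cs.rightInvSeq_concat, List.concat_eq_append, List.count_append,
      List.count_singleton]
    have : (List.map (MulAut.conj (cs.simple i)) (cs.rightInvSeq α)).count (cs.simple i)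
        = 0 := by
      rw [List.count_eq_zero]
      intro hmem
      obtain ⟨x, hx, hconj⟩ := List.mem_map.mp hmem
      have hfix : MulAut.conj (cs.simple i) (cs.simple i) = cs.simple i := by
        rw [MulAut.conj_apply, cs.inv_simple, mul_assoc, cs.simple_mul_simple_cancel_left]
      have : x = cs.simple i := (MulAut.conj (cs.simple i)).injective
        (by rw [hconj, hfix])
      exact hnotmem (this ▸ hx)
    rw [this]
    simp
  have hpar := count_parity cs ω (α.concat i) hprod.symm (cs.simple i)
  rw [hcount, pow_one] at hpar
  by_contra hnm
  rw [List.count_eq_zero_of_not_mem hnm, pow_zero] at hpar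
  exact neg_one_ne_one' hpar.symm

/-- The key combinatorial lemma: if `w` is an involution, `ℓ(s i * w) < ℓ(w)`, and
`s i * w ≠ w * s i`, then `ℓ(s i * w * s i) < ℓ(w * s i)`. -/
lemma key_length {w : W} {i : B} (hw : w * w = 1)
    (hd : cs.length (cs.simple i * w) < cs.length w)
    (hne : cs.simple i * w ≠ w * cs.simple i) :
    cs.length (cs.simple i * w * cs.simple i) < cs.length (w * cs.simple i) := by
  have hwinv : w⁻¹ = w := inv_eq_of_mul_eq_one_right hw
  have hlsw : cs.length (cs.simple i * w) + 1 = cs.length w := by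
    rcases cs.length_simple_mul w i with h | h <;> omega
  have hlws : cs.length (w * cs.simple i) = cs.length (cs.simple i * w) := by
    rw [← cs.length_inv, mul_inv_rev, cs.inv_simple, hwinv]
  by_contra hcon
  have hsws : cs.length (cs.simple i * w * cs.simple i)
      = cs.length w := by
    rcases cs.length_mul_simple (cs.simple i * w) i with h | h <;> omega
  -- x := s i * w , reduced word
  obtain ⟨ω, hω_red, hω⟩ := cs.exists_reduced_word' (cs.simple i * w)
  have hβ : cs.wordProd (i :: ω) = w := by
    rw [cs.wordProd_cons, ← hω, cs.simple_mul_simple_cancel_left]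
  have hβred : cs.IsReduced (i :: ω) := by
    rw [CoxeterSystem.IsReduced, hβ, List.length_cons]
    rw [CoxeterSystem.IsReduced] at hω_red
    rw [← hω] at hω_red
    omega
  have hdesc : cs.length (cs.wordProd (i :: ω) * cs.simple i)
      < cs.length (cs.wordProd (i :: ω)) := by
    rw [hβ]
    omega
  have hmem := mem_ris_of_descent cs hβred hdesc
  have hris : cs.rightInvSeq (i :: ω)
      = ((cs.wordProd ω)⁻¹ * cs.simple i * cs.wordProd ω) :: cs.rightInvSeq ω := rfl
  rw [hris, List.mem_cons] at hmem
  rcases hmem with hmem | hmem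
  · -- head : s i = x⁻¹ * s i * x  with x = s i * w ; gives s i * w = w * s i
    rw [← hω] at hmem
    apply hne
    have hx : (cs.simple i * w)⁻¹ = w * cs.simple i := by
      rw [mul_inv_rev, hwinv, cs.inv_simple]
    rw [hx, cs.simple_mul_simple_cancel_right] at hmem
    have h5 := congrArg (fun y => y * w) hmem
    rw [mul_assoc, mul_assoc, hw, mul_one] at h5
    exact h5
  · have h2 := (cs.isRightInversion_of_mem_rightInvSeq hω_red hmem).2
    rw [← hω] at h2
    omega

open Finsupp LaurentPolynomial in
lemma T_neg_one_add_one_ne_zero : (T (-1) + 1 : LaurentPolynomial ℤ) ≠ 0 := by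
  intro h
  have h1 : (T (-1) : LaurentPolynomial ℤ) = C (-1) * T 0 := by
    rw [eq_neg_of_add_eq_zero_left h]
    simp [T_zero]
  have := support_C_mul_T_of_ne_zero (by norm_num : (-1 : ℤ) ≠ 0) 0
  rw [← h1] at this
  have h2 := support_C_mul_T_of_ne_zero (by norm_num : (1 : ℤ) ≠ 0) (-1)
  simp at h2
  rw [h2] at this
  simp at this

open Finsupp LaurentPolynomial in
theorem bar_involution_uniqueness' {B W : Type*} [Group W] {M : CoxeterMatrix B}
    (cs : CoxeterSystem M W)
    (Ts : B → Module.End (LaurentPolynomial ℤ) (W →₀ LaurentPolynomial ℤ))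
    (h1 : ∀ (i : B) (w : W), w * w = 1 →
      cs.simple i * w = w * cs.simple i →
      cs.length w < cs.length (cs.simple i * w) →
      Ts i (single w 1) + single w 1 =
        (T 1 + 1 : LaurentPolynomial ℤ) • (single w 1 + single (cs.simple i * w) 1))
    (h3 : ∀ (i : B) (w : W), w * w = 1 →
      cs.simple i * w ≠ w * cs.simple i →
      cs.length w < cs.length (cs.simple i * w) →
      Ts i (single w 1) + single w 1 =
        single w 1 + single (cs.simple i * w * cs.simple i) 1)
    (f : (W →₀ LaurentPolynomial ℤ) →ₗ[ℤ] (W →₀ LaurentPolynomial ℤ))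
    (hf1 : ∀ (n : ℤ) (m : W →₀ LaurentPolynomial ℤ),
      f ((T n : LaurentPolynomial ℤ) • m) = (T (-n) : LaurentPolynomial ℤ) • f m)
    (hf2 : f (single (1 : W) (1 : LaurentPolynomial ℤ)) = 0)
    (hf3 : ∀ (i : B) (m : W →₀ LaurentPolynomial ℤ),
      f (Ts i m + m) = (T (-2) : LaurentPolynomial ℤ) • (Ts i (f m) + f m)) :
    ∀ m : W →₀ LaurentPolynomial ℤ,
      m ∈ Submodule.span (LaurentPolynomial ℤ)
        (Set.range (fun w : {w : W // w * w = 1} => single (w : W) (1 : LaurentPolynomial ℤ))) →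
      f m = 0 := by
  have hfT : ∀ (c : LaurentPolynomial ℤ) (x : W →₀ LaurentPolynomial ℤ), f x = 0 →
      f (c • x) = 0 := by
    intro c x hx
    induction c using LaurentPolynomial.induction_on' with
    | add p q hp hq => rw [add_smul, map_add, hp, hq, add_zero]
    | C_mul_T n a =>
      rw [mul_smul, C_eq_algebraMap, algebraMap_smul, map_smul, hf1, hx, smul_zero, smul_zero]
  have key : ∀ n : ℕ, ∀ w : W, w * w = 1 → cs.length w = n → f (single w 1) = 0 := by
    intro n
    induction n using Nat.strong_induction_on with
    | _ n IH =>
      intro w hw hn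
      rcases eq_or_ne w 1 with rfl | hne1
      · exact hf2
      obtain ⟨i, hi⟩ := cs.exists_leftDescent_of_ne_one hne1
      rw [CoxeterSystem.IsLeftDescent] at hi
      by_cases hc : cs.simple i * w = w * cs.simple i
      · -- commuting case
        have hv2 : (cs.simple i * w) * (cs.simple i * w) = 1 := by
          nth_rewrite 2 [hc]
          rw [mul_assoc, ← mul_assoc w w, hw, one_mul, cs.simple_mul_simple_self]
        have hsv : cs.simple i * (cs.simple i * w) = w := cs.simple_mul_simple_cancel_left i
        have hvc : cs.simple i * (cs.simple i * w) = (cs.simple i * w) * cs.simple i := by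
          rw [hsv, hc, cs.simple_mul_simple_cancel_right]
        have hlv : cs.length (cs.simple i * w)
            < cs.length (cs.simple i * (cs.simple i * w)) := by
          rw [hsv]; exact hi
        have hfv : f (single (cs.simple i * w) 1) = 0 :=
          IH (cs.length (cs.simple i * w)) (by omega) _ hv2 rfl
        have hrel := h1 i (cs.simple i * w) hv2 hvc hlv
        rw [hsv] at hrel
        have fX : f (single (cs.simple i * w) 1 + single w 1) = f (single w 1) := by
          rw [map_add, hfv, zero_add]
        have hL := hf3 i (single (cs.simple i * w) 1)
        rw [hrel, hfv, map_zero, add_zero, smul_zero, add_smul, one_smul, map_add, hf1,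
          fX] at hL
        have hzero : ((T (-1) + 1 : LaurentPolynomial ℤ)) • f (single w 1) = 0 := by
          rw [add_smul, one_smul]; exact hL
        rcases smul_eq_zero.mp hzero with h | h
        · exact absurd h T_neg_one_add_one_ne_zero
        · exact h
      · -- noncommuting case
        have hwinv : w⁻¹ = w := inv_eq_of_mul_eq_one_right hw
        have hv2 : (cs.simple i * w * cs.simple i) * (cs.simple i * w * cs.simple i) = 1 := by
          calc (cs.simple i * w * cs.simple i) * (cs.simple i * w * cs.simple i)
              = cs.simple i * w * (cs.simple i * (cs.simple i * (w * cs.simple i))) := by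
                simp [mul_assoc]
            _ = cs.simple i * w * (w * cs.simple i) := by
                rw [cs.simple_mul_simple_cancel_left]
            _ = cs.simple i * (w * w) * cs.simple i := by simp [mul_assoc]
            _ = 1 := by rw [hw, mul_one, cs.simple_mul_simple_self]
        have hsv : cs.simple i * (cs.simple i * w * cs.simple i) = w * cs.simple i := by
          rw [← mul_assoc, cs.simple_mul_simple_cancel_left i]
        have hvs : (cs.simple i * w * cs.simple i) * cs.simple i = cs.simple i * w :=
          cs.simple_mul_simple_cancel_right i
        have hnev : cs.simple i * (cs.simple i * w * cs.simple i)
            ≠ (cs.simple i * w * cs.simple i) * cs.simple i := by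
          rw [hsv, hvs]; exact fun h => hc h.symm
        have hlsw_ws : cs.length (w * cs.simple i) = cs.length (cs.simple i * w) := by
          rw [← cs.length_inv, mul_inv_rev, cs.inv_simple, hwinv]
        have hkey := key_length cs hw hi hc
        have hlv : cs.length (cs.simple i * w * cs.simple i)
            < cs.length (cs.simple i * (cs.simple i * w * cs.simple i)) := by
          rw [hsv]; exact hkey
        have hfv : f (single (cs.simple i * w * cs.simple i) 1) = 0 :=
          IH (cs.length (cs.simple i * w * cs.simple i)) (by omega) _ hv2 rfl
        have hsvs : cs.simple i * (cs.simple i * w * cs.simple i) * cs.simple i = w := by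
          rw [hsv, cs.simple_mul_simple_cancel_right]
        have hrel := h3 i (cs.simple i * w * cs.simple i) hv2 hnev hlv
        rw [hsvs] at hrel
        have hL := hf3 i (single (cs.simple i * w * cs.simple i) 1)
        rw [hrel, map_add, hfv, zero_add, map_zero, zero_add, smul_zero] at hL
        exact hL
  intro m hm
  refine Submodule.span_induction ?_ ?_ ?_ ?_ hm
  · rintro x ⟨w, rfl⟩
    exact key (cs.length (w : W)) w w.2 rfl
  · exact map_zero f
  · intro x y _ _ hx hy
    rw [map_add, hx, hy, add_zero]
  · intro c x _ hx
    exact hfT c x hx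

end BarInvolutionAux


/-- uniqueness of the bar involution. Let `M` be the free `ℤ[u,u⁻¹]`-module
on the involutions of `W` (realized as the span of the `a_w` with `w * w = 1`), with the
Hecke-type operators `T_s`. If `f : M → M` is ℤ-linear, `f(uⁿm) = u⁻ⁿ f(m)`, `f(a₁) = 0`
and `f((T_s+1)m) = u⁻²(T_s+1)f(m)` for all `m`, `s`, then `f = 0` on `M`. -/
theorem bar_involution_uniqueness {B W : Type*} [Group W] {M : CoxeterMatrix B}
    (cs : CoxeterSystem M W)
    (Ts : B → Module.End (LaurentPolynomial ℤ) (W →₀ LaurentPolynomial ℤ))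
    (h1 : ∀ (i : B) (w : W), w * w = 1 →
      cs.simple i * w = w * cs.simple i →
      cs.length w < cs.length (cs.simple i * w) →
      Ts i (single w 1) + single w 1 =
        (T 1 + 1 : LaurentPolynomial ℤ) • (single w 1 + single (cs.simple i * w) 1))
    (h2 : ∀ (i : B) (w : W), w * w = 1 →
      cs.simple i * w = w * cs.simple i →
      cs.length (cs.simple i * w) < cs.length w →
      Ts i (single w 1) + single w 1 =
        (T 2 - T 1 : LaurentPolynomial ℤ) • (single w 1 + single (cs.simple i * w) 1))
    (h3 : ∀ (i : B) (w : W), w * w = 1 →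
      cs.simple i * w ≠ w * cs.simple i →
      cs.length w < cs.length (cs.simple i * w) →
      Ts i (single w 1) + single w 1 =
        single w 1 + single (cs.simple i * w * cs.simple i) 1)
    (h4 : ∀ (i : B) (w : W), w * w = 1 →
      cs.simple i * w ≠ w * cs.simple i →
      cs.length (cs.simple i * w) < cs.length w →
      Ts i (single w 1) + single w 1 =
        (T 2 : LaurentPolynomial ℤ) • (single w 1 + single (cs.simple i * w * cs.simple i) 1))
    (f : (W →₀ LaurentPolynomial ℤ) →ₗ[ℤ] (W →₀ LaurentPolynomial ℤ))
    (hf1 : ∀ (n : ℤ) (m : W →₀ LaurentPolynomial ℤ),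
      f ((T n : LaurentPolynomial ℤ) • m) = (T (-n) : LaurentPolynomial ℤ) • f m)
    (hf2 : f (single (1 : W) (1 : LaurentPolynomial ℤ)) = 0)
    (hf3 : ∀ (i : B) (m : W →₀ LaurentPolynomial ℤ),
      f (Ts i m + m) = (T (-2) : LaurentPolynomial ℤ) • (Ts i (f m) + f m)) :
    ∀ m : W →₀ LaurentPolynomial ℤ,
      m ∈ Submodule.span (LaurentPolynomial ℤ)
        (Set.range (fun w : {w : W // w * w = 1} => single (w : W) (1 : LaurentPolynomial ℤ))) →
      f m = 0 := by
  exact BarInvolutionAux.bar_involution_uniqueness' cs Ts h1 h3 f hf1 hf2 hf3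
end
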